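/- arXiv:math/0204120 — 5 statements merged into one kernel-verified Lean document; each statement's English description precedes it below -/
import Mathlib

section
/- For every abelian group G, the space G^# is zero-dimensional: the clopen subsets of G^# form a basis for its topology. -/
open TopologicalSpace Filter Set Metric

namespace BohrAux

notation "𝕋" => AddCircle (1 : ℝ)

lemma torsion_of_ratCast (q : ℚ) : IsOfFinAddOrder (((q : ℝ) : 𝕋)) := by
  rw [isOfFinAddOrder_iff_nsmul_eq_zero]
  refine ⟨q.den, q.pos, ?_⟩
  rw [← AddCircle.coe_nsmul, AddCircle.coe_eq_zero_iff]
  refine ⟨q.num, ?_⟩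
  have h : ((q.den : ℝ)) * (q : ℝ) = (q.num : ℝ) := by
    rw [Rat.cast_def]
    field_simp
  simp [zsmul_eq_mul, nsmul_eq_mul, h]

lemma exists_rat_of_torsion {t : 𝕋} (h : IsOfFinAddOrder t) : ∃ q : ℚ, t = ((q : ℝ) : 𝕋) := by
  induction t using QuotientAddGroup.induction_on with
  | H x =>
  obtain ⟨n, hn, hx⟩ := isOfFinAddOrder_iff_nsmul_eq_zero.1 h
  rw [← AddCircle.coe_nsmul, AddCircle.coe_eq_zero_iff] at hx
  obtain ⟨m, hm⟩ := hx
  refine ⟨(m : ℚ) / n, ?_⟩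
  congr 1
  have hn' : (n : ℝ) ≠ 0 := by exact_mod_cast hn.ne'
  simp only [zsmul_eq_mul, mul_one, nsmul_eq_mul] at hm
  push_cast
  field_simp
  linarith [hm]

lemma norm_rat_of_torsion {t : 𝕋} (h : IsOfFinAddOrder t) : ∃ q : ℚ, ‖t‖ = (q : ℝ) := by
  obtain ⟨q, rfl⟩ := exists_rat_of_torsion h
  refine ⟨|q - round q|, ?_⟩
  rw [AddCircle.norm_eq]
  push_cast [Rat.round_cast]
  norm_num

lemma torsion_of_norm_rat {t : 𝕋} {q : ℚ} (h : ‖t‖ = (q : ℝ)) : IsOfFinAddOrder t := by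
  induction t using QuotientAddGroup.induction_on with
  | H x =>
  rw [AddCircle.norm_eq] at h
  simp only [inv_one, one_mul, mul_one] at h
  rcases abs_eq (by rw [← h]; positivity) |>.1 h with h' | h'
  · have : x = ((round x : ℚ) + q : ℚ) := by push_cast; linarith
    rw [this]; exact torsion_of_ratCast _
  · have : x = ((round x : ℚ) - q : ℚ) := by push_cast; linarith
    rw [this]; exact torsion_of_ratCast _

lemma exists_proj : ∃ π : 𝕋 →+ 𝕋,
    (∀ t, IsOfFinAddOrder (π t)) ∧ (∀ t, IsOfFinAddOrder t → π t = t) := by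
  obtain ⟨W, hW⟩ := Submodule.exists_isCompl (ℚ ∙ (1 : ℝ))
  set p := (ℚ ∙ (1 : ℝ)).projectionOnto W hW with hp
  have hmem : ∀ q : ℚ, (q : ℝ) ∈ (ℚ ∙ (1 : ℝ)) := fun q =>
    Submodule.mem_span_singleton.2 ⟨q, by simp⟩
  have hp1 : ∀ (x : ℝ) (hx : x ∈ (ℚ ∙ (1 : ℝ))), ((p x : ℝ)) = x := fun x hx => by
    have := Submodule.linearProjOfIsCompl_apply_left hW ⟨x, hx⟩
    rw [hp]; rw [this]
  let f : ℝ →+ 𝕋 :=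
  { toFun := fun x => (((p x : ℝ)) : 𝕋)
    map_zero' := by simp
    map_add' := fun x y => by
      show (((p (x + y) : ℝ)) : 𝕋) = (((p x : ℝ)) : 𝕋) + (((p y : ℝ)) : 𝕋)
      rw [map_add, Submodule.coe_add, AddCircle.coe_add] }
  have hf : ∀ x ∈ AddSubgroup.zmultiples (1 : ℝ), f x = 0 := by
    intro x hx
    obtain ⟨k, hk⟩ := AddSubgroup.mem_zmultiples_iff.1 hx
    simp only [zsmul_eq_mul, mul_one] at hk
    subst hk
    show (((p (k : ℝ) : ℝ)) : 𝕋) = 0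
    rw [hp1 (k : ℝ) (by exact_mod_cast hmem (k : ℚ))]
    exact (AddCircle.coe_eq_zero_iff _).2 ⟨k, by simp⟩
  refine ⟨QuotientAddGroup.lift _ f hf, ?_, ?_⟩
  · intro t
    induction t using QuotientAddGroup.induction_on with
    | H x =>
    show IsOfFinAddOrder (((p x : ℝ) : 𝕋))
    obtain ⟨r, hr⟩ := Submodule.mem_span_singleton.1 (p x).2
    have : ((p x : ℝ)) = (r : ℝ) := by rw [← hr]; simp
    rw [this]
    exact torsion_of_ratCast r
  · intro t ht
    obtain ⟨q, rfl⟩ := exists_rat_of_torsion ht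
    show (((p (q : ℝ) : ℝ)) : 𝕋) = _
    rw [hp1 _ (hmem q)]

end BohrAux

/-- The Bohr topology on an abelian group `G`: the initial topology induced by the
family of all group homomorphisms from `G` to the circle group `ℝ/ℤ`. -/
noncomputable def bohrTopology (G : Type*) [AddCommGroup G] : TopologicalSpace G :=
  ⨅ χ : G →+ AddCircle (1 : ℝ), TopologicalSpace.induced χ inferInstance

/-- For every abelian group `G`, the space `G^#` is zero-dimensional:
the clopen subsets form a basis for the topology. -/
theorem bohr_isTopologicalBasis_clopen (G : Type*) [AddCommGroup G] :
    letI := bohrTopology G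
    TopologicalSpace.IsTopologicalBasis {s : Set G | IsClopen s} := by
  letI τ : TopologicalSpace G := bohrTopology G
  show TopologicalSpace.IsTopologicalBasis {s : Set G | IsClopen s}
  obtain ⟨π, hπtor, hπfix⟩ := BohrAux.exists_proj
  have hcont : ∀ χ : G →+ 𝕋, Continuous χ := fun χ =>
    continuous_iInf_dom (i := χ) continuous_induced_dom
  have hπφ : ∀ (χ : G →+ 𝕋) (y : G), π ((χ - π.comp χ) y) = 0 := fun χ y => by
    simp only [AddMonoidHom.sub_apply, AddMonoidHom.comp_apply, map_sub]
    rw [hπfix (π (χ y)) (hπtor (χ y)), sub_self]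
  refine TopologicalSpace.isTopologicalBasis_of_isOpen_of_nhds (fun u hu => hu.isOpen) ?_
  intro a u hau hu
  have hu' : u ∈ @nhds G τ a := hu.mem_nhds hau
  rw [show @nhds G τ a
      = ⨅ χ : G →+ 𝕋, @nhds G (TopologicalSpace.induced χ inferInstance) a from nhds_iInf,
    Filter.mem_iInf] at hu'
  obtain ⟨I, Ifin, V, hV, hUV⟩ := hu'
  have key : ∀ i : I, ∃ C : Set G, IsClopen C ∧ a ∈ C ∧ C ⊆ V i := by
    intro i
    set χ : G →+ 𝕋 := (i : G →+ 𝕋) with hχ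
    have hVi := hV i
    rw [nhds_induced (χ : G → 𝕋) a] at hVi
    obtain ⟨W, hW, hWV⟩ := Filter.mem_comap.1 hVi
    obtain ⟨ε, hε, hball⟩ := Metric.mem_nhds_iff.1 hW
    obtain ⟨r, hr_irr, hr0, hrε⟩ := exists_irrational_btwn (half_pos hε)
    obtain ⟨b, hb0, hbε⟩ := exists_rat_btwn (half_pos hε)
    set ψ : G →+ 𝕋 := π.comp χ with hψ
    set φ : G →+ 𝕋 := χ - ψ with hφ
    have hψtor : ∀ y : G, IsOfFinAddOrder (ψ y) := fun y => hπtor (χ y)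
    refine ⟨ψ ⁻¹' Metric.ball (ψ a) r ∩ φ ⁻¹' Metric.ball (φ a) (b : ℝ), ⟨?_, ?_⟩, ?_, ?_⟩
    · -- closed
      have h1 : ψ ⁻¹' Metric.ball (ψ a) r = ψ ⁻¹' Metric.closedBall (ψ a) r := by
        ext x
        simp only [Set.mem_preimage, Metric.mem_ball, Metric.mem_closedBall]
        refine ⟨le_of_lt, fun hle => ?_⟩
        rcases lt_or_eq_of_le hle with h | h
        · exact h
        · exfalso
          have hnorm : ‖ψ (x - a)‖ = r := by
            rw [map_sub, ← dist_eq_norm]; exact h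
          obtain ⟨q, hq⟩ := BohrAux.norm_rat_of_torsion (hψtor (x - a))
          exact hr_irr ⟨q, hq ▸ hnorm⟩
      have h2 : φ ⁻¹' Metric.ball (φ a) (b : ℝ) = φ ⁻¹' Metric.closedBall (φ a) (b : ℝ) := by
        ext x
        simp only [Set.mem_preimage, Metric.mem_ball, Metric.mem_closedBall]
        refine ⟨le_of_lt, fun hle => ?_⟩
        rcases lt_or_eq_of_le hle with h | h
        · exact h
        · exfalso
          have hnorm : ‖φ (x - a)‖ = (b : ℝ) := by
            rw [map_sub, ← dist_eq_norm]; exact h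
          have htor := BohrAux.torsion_of_norm_rat hnorm
          have hz : φ (x - a) = 0 := by
            rw [← hπfix _ htor]
            exact hπφ χ (x - a)
          rw [hz, norm_zero] at hnorm
          exact absurd hnorm.symm (by exact_mod_cast hb0.ne')
      rw [h1, h2]
      exact IsClosed.inter
        (IsClosed.preimage (hcont ψ) Metric.isClosed_closedBall)
        (IsClosed.preimage (hcont φ) Metric.isClosed_closedBall)
    · -- open
      exact IsOpen.inter
        (IsOpen.preimage (hcont ψ) Metric.isOpen_ball)
        (IsOpen.preimage (hcont φ) Metric.isOpen_ball)
    · exact ⟨by simp [Metric.mem_ball, hr0], by simpa [Metric.mem_ball] using hb0⟩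
    · rintro x ⟨hx1, hx2⟩
      apply hWV
      apply hball
      have hsum : χ (x - a) = ψ (x - a) + φ (x - a) := by
        simp [hφ]
      have : dist (χ x) (χ a) < ε := by
        rw [dist_eq_norm, ← map_sub, hsum]
        calc ‖ψ (x - a) + φ (x - a)‖ ≤ ‖ψ (x - a)‖ + ‖φ (x - a)‖ := norm_add_le _ _
        _ = dist (ψ x) (ψ a) + dist (φ x) (φ a) := by rw [map_sub, map_sub, dist_eq_norm, dist_eq_norm]
        _ < r + (b : ℝ) := add_lt_add hx1 hx2
        _ < ε / 2 + ε / 2 := add_lt_add hrε hbε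
        _ = ε := add_halves ε
      exact this
  choose C hCclopen hCa hCV using key
  haveI : Finite I := Ifin.to_subtype
  refine ⟨⋂ i, C i, isClopen_iInter_of_finite hCclopen, Set.mem_iInter.2 hCa, ?_⟩
  rw [hUV]
  exact Set.iInter_mono hCV
end

section
/- For every abelian group G, every compact subset of G^# is finite. -/
open scoped Pointwise

open MeasureTheory Topology Filter

namespace BohrAux

/-- The canonical embedding of `ℚ/ℤ` into `ℝ/ℤ`. -/
noncomputable def ratCircleHom : AddCircle (1 : ℚ) →+ AddCircle (1 : ℝ) :=
  QuotientAddGroup.lift (AddSubgroup.zmultiples (1 : ℚ))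
    ((QuotientAddGroup.mk' (AddSubgroup.zmultiples (1 : ℝ))).comp
      (Rat.castHom ℝ).toAddMonoidHom)
    (by
      intro q hq
      obtain ⟨n, hn⟩ := AddSubgroup.mem_zmultiples_iff.mp hq
      have hq' : q = (n : ℚ) := by rw [← hn, zsmul_one]
      have : ((q : ℝ)) ∈ AddSubgroup.zmultiples (1 : ℝ) :=
        AddSubgroup.mem_zmultiples_iff.mpr ⟨n, by rw [zsmul_one, hq']; norm_cast⟩
      simpa [QuotientAddGroup.eq_zero_iff] using this)

@[simp] lemma ratCircleHom_mk (q : ℚ) :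
    ratCircleHom (q : AddCircle (1 : ℚ)) = ((q : ℝ) : AddCircle (1 : ℝ)) := rfl

lemma ratCircleHom_injective : Function.Injective ratCircleHom := by
  rw [injective_iff_map_eq_zero]
  intro a ha
  induction a using QuotientAddGroup.induction_on with
  | H q =>
    rw [ratCircleHom_mk] at ha
    have h1 : ((q : ℝ)) ∈ AddSubgroup.zmultiples (1 : ℝ) :=
      (QuotientAddGroup.eq_zero_iff _).mp ha
    obtain ⟨n, hn⟩ := AddSubgroup.mem_zmultiples_iff.mp h1
    rw [zsmul_one] at hn
    have hq : q = (n : ℚ) := by exact_mod_cast hn.symm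
    refine (QuotientAddGroup.eq_zero_iff _).mpr ?_
    exact AddSubgroup.mem_zmultiples_iff.mpr ⟨n, by rw [zsmul_one, hq]⟩

/-- `ℝ/ℤ`-valued characters separate the points of any abelian group. -/
lemma exists_char {G : Type*} [AddCommGroup G] {a : G} (ha : a ≠ 0) :
    ∃ χ : G →+ AddCircle (1 : ℝ), χ a ≠ 0 := by
  obtain ⟨c, hc⟩ := CharacterModule.exists_character_apply_ne_zero_of_ne_zero ha
  refine ⟨AddMonoidHom.mk' (fun x => ratCircleHom (c x))
      (fun x y => by
        show ratCircleHom (c (x + y)) = ratCircleHom (c x) + ratCircleHom (c y)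
        rw [map_add, map_add]), ?_⟩
  intro h
  exact hc (ratCircleHom_injective (by simpa using h))

/-- Characters on a subgroup extend to the whole group (since `ℝ/ℤ` is divisible). -/
lemma char_extend {G : Type*} [AddCommGroup G] (H : AddSubgroup G)
    (χ : H →+ AddCircle (1 : ℝ)) :
    ∃ χ' : G →+ AddCircle (1 : ℝ), ∀ h : H, χ' h = χ h := by
  obtain ⟨χ', hχ'⟩ := (Module.Baer.of_divisible (AddCircle (1 : ℝ))).extension_property_addMonoidHom
    H.subtype Subtype.coe_injective χ
  exact ⟨χ', fun h => DFunLike.congr_fun hχ' h⟩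

lemma continuous_char {G : Type*} [AddCommGroup G] (χ : G →+ AddCircle (1 : ℝ)) :
    Continuous[bohrTopology G, inferInstance] χ :=
  continuous_iff_le_induced.mpr (iInf_le _ χ)

/-- Every subgroup is closed in the Bohr topology. -/
lemma subgroup_isClosed {G : Type*} [AddCommGroup G] (H : AddSubgroup G) :
    IsClosed[bohrTopology G] (H : Set G) := by
  letI := bohrTopology G
  have key : (H : Set G) =
      ⋂ χ ∈ {χ : G →+ AddCircle (1 : ℝ) | ∀ h ∈ H, χ h = 0}, χ ⁻¹' {0} := by
    ext x
    simp only [Set.mem_iInter, Set.mem_preimage, Set.mem_singleton_iff, Set.mem_setOf_eq,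
      SetLike.mem_coe]
    constructor
    · exact fun hx χ hχ => hχ x hx
    · intro hx
      by_contra hxH
      have hne : (QuotientAddGroup.mk x : G ⧸ H) ≠ 0 := by
        simpa [QuotientAddGroup.eq_zero_iff] using hxH
      obtain ⟨c, hc⟩ := exists_char hne
      apply hc
      have h0 : ∀ h ∈ H, (c.comp (QuotientAddGroup.mk' H)) h = 0 := by
        intro h hh
        have : (QuotientAddGroup.mk' H) h = 0 := (QuotientAddGroup.eq_zero_iff h).mpr hh
        simp [AddMonoidHom.comp_apply, this]
      simpa using hx _ h0
  rw [key]
  exact isClosed_biInter fun χ _ =>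
    IsClosed.preimage (continuous_char χ) isClosed_singleton

/-- The Bohr topology of a subgroup is the subspace topology from the Bohr topology. -/
lemma bohr_induced {G : Type*} [AddCommGroup G] (H : AddSubgroup G) :
    bohrTopology H = TopologicalSpace.induced H.subtype (bohrTopology G) := by
  unfold bohrTopology
  rw [induced_iInf]
  simp_rw [induced_compose]
  apply le_antisymm
  · exact le_iInf fun χ => iInf_le _ (χ.comp H.subtype)
  · refine le_iInf fun χ => ?_
    obtain ⟨χ', hχ'⟩ := char_extend H χ
    refine iInf_le_of_le χ' (le_of_eq ?_)
    congr 1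
    exact funext fun h => hχ' h

set_option maxHeartbeats 1000000 in
set_option synthInstance.maxHeartbeats 400000 in
lemma countable_case {G : Type*} [AddCommGroup G] [Countable G] {K : Set G}
    (hK : @IsCompact G (bohrTopology G) K) (hinf : K.Infinite) : False := by
  letI tG := bohrTopology G
  -- the group of characters, as a closed subgroup of the product
  let A : AddSubgroup (G → AddCircle (1 : ℝ)) :=
  { carrier := {f | ∀ x y, f (x + y) = f x + f y}
    add_mem' := by
      intro f g hf hg x y
      simp only [Set.mem_setOf_eq] at hf hg
      simp only [Pi.add_apply, hf x y, hg x y, add_add_add_comm]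
    zero_mem' := by intro x y; simp
    neg_mem' := by
      intro f hf x y
      simp only [Set.mem_setOf_eq] at hf
      simp only [Pi.neg_apply, hf x y, neg_add] }
  have hAclosed : IsClosed (A : Set (G → AddCircle (1 : ℝ))) := by
    have h1 : (A : Set (G → AddCircle (1 : ℝ))) =
        ⋂ (x : G), ⋂ (y : G), {f : G → AddCircle (1 : ℝ) | f (x + y) = f x + f y} := by
      ext f
      simp only [Set.mem_iInter, Set.mem_setOf_eq]
      rfl
    rw [h1]
    exact isClosed_iInter fun x => isClosed_iInter fun y =>
      isClosed_eq (continuous_apply (x + y)) ((continuous_apply x).add (continuous_apply y))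
  haveI : CompactSpace A := isCompact_iff_compactSpace.mp hAclosed.isCompact
  haveI : WeaklyLocallyCompactSpace A := inferInstance
  haveI : SecondCountableTopology A :=
    @TopologicalSpace.Subtype.secondCountableTopology _ _ _ inferInstance
  -- membership of actual characters
  have hmem : ∀ χ : G →+ AddCircle (1 : ℝ), (⇑χ : G → AddCircle (1 : ℝ)) ∈ A :=
    fun χ x y => map_add χ x y
  -- evaluation maps are Bohr-continuous
  have hcont : ∀ f : A, Continuous fun g : G => (f : G → AddCircle (1 : ℝ)) g := by
    intro f
    exact continuous_char (AddMonoidHom.mk' (f : G → AddCircle (1 : ℝ)) f.2)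
  -- Haar measure on A
  letI : MeasurableSpace A := borel A
  haveI : BorelSpace A := ⟨rfl⟩
  haveI : Nonempty A := ⟨0⟩
  let K₀ : TopologicalSpace.PositiveCompacts A := ⊤
  let μ : Measure A := MeasureTheory.Measure.addHaarMeasure K₀
  have hμuniv : μ Set.univ = 1 := by
    have := MeasureTheory.Measure.addHaarMeasure_self (K₀ := K₀)
    simpa [K₀, TopologicalSpace.PositiveCompacts.coe_top] using this
  haveI : IsFiniteMeasure μ := ⟨by rw [hμuniv]; exact ENNReal.one_lt_top⟩
  -- the character functions as complex functions on A
  let e : G → A → ℂ := fun g f => (AddCircle.toCircle ((f : G → AddCircle (1 : ℝ)) g) : ℂ)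
  have he_cont : ∀ g, Continuous (e g) := by
    intro g
    exact continuous_subtype_val.comp (AddCircle.continuous_toCircle.comp
      ((continuous_apply g).comp continuous_subtype_val))
  have he_norm : ∀ g f, ‖e g f‖ = 1 := by
    intro g f
    exact Circle.norm_coe _
  have he_int : ∀ g, Integrable (e g) μ := by
    intro g
    rw [← integrableOn_univ]
    exact (he_cont g).continuousOn.integrableOn_compact isCompact_univ
  -- integrals of nontrivial characters vanish
  have hint0 : ∀ g : G, g ≠ 0 → ∫ f, e g f ∂μ = 0 := by
    intro g hg
    obtain ⟨χ, hχ⟩ := exists_char hg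
    set ψ : A := ⟨⇑χ, hmem χ⟩ with hψ
    have h1 : (∫ f, e g (ψ + f) ∂μ) = ∫ f, e g f ∂μ :=
      integral_add_left_eq_self (fun f => e g f) ψ
    have h2 : ∀ f : A, e g (ψ + f) = e g ψ * e g f := by
      intro f
      show (AddCircle.toCircle (χ g + (f : G → AddCircle (1 : ℝ)) g) : ℂ) = _
      rw [AddCircle.toCircle_add]
      push_cast
      ring
    have h3 : e g ψ * ∫ f, e g f ∂μ = ∫ f, e g f ∂μ := by
      rw [← integral_const_mul]
      rw [← h1]
      congr 1
      exact funext fun f => (h2 f).symm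
    have h4 : e g ψ ≠ 1 := by
      intro h
      apply hχ
      have h' : (AddCircle.toCircle (χ g) : ℂ) = (AddCircle.toCircle (0 : AddCircle (1 : ℝ)) : ℂ) := by
        rw [AddCircle.toCircle_zero, Circle.coe_one]
        exact h
      exact AddCircle.injective_toCircle one_ne_zero (Circle.coe_injective h')
    have h5 : (e g ψ - 1) * ∫ f, e g f ∂μ = 0 := by
      rw [sub_mul, one_mul, h3, sub_self]
    rcases mul_eq_zero.mp h5 with h | h
    · exact absurd (sub_eq_zero.mp h) h4
    · exact h
  -- a countable dense subset of A
  obtain ⟨D, hDcount, hDdense⟩ := TopologicalSpace.exists_countable_dense A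
  haveI : Countable D := hDcount.to_subtype
  -- the evaluation map on the dense set
  let Φ : G → (D → AddCircle (1 : ℝ)) := fun g d => ((d : A) : G → AddCircle (1 : ℝ)) g
  have hΦcont : Continuous[tG, inferInstance] Φ := continuous_pi fun d => hcont d
  -- the sequence of distinct points of K
  let x : ℕ → G := fun n => (Set.Infinite.natEmbedding K hinf n : G)
  have hxK : ∀ n, x n ∈ K := fun n => (Set.Infinite.natEmbedding K hinf n).2
  have hxinj : Function.Injective x :=
    Subtype.coe_injective.comp (Set.Infinite.natEmbedding K hinf).injective
  -- K as a compact space, closed-embedded in a first countable space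
  haveI : CompactSpace K := isCompact_iff_compactSpace.mp hK
  let q : K → (D → AddCircle (1 : ℝ)) := fun k => Φ k
  have hqcont : Continuous q := hΦcont.comp continuous_subtype_val
  have hqinj : Function.Injective q := by
    intro a b hab
    have key : ∀ f : A, (f : G → AddCircle (1 : ℝ)) (a : G) = (f : G → AddCircle (1 : ℝ)) (b : G) := by
      have hc1 : Continuous fun f : A => (f : G → AddCircle (1 : ℝ)) (a : G) :=
        (continuous_apply _).comp continuous_subtype_val
      have hc2 : Continuous fun f : A => (f : G → AddCircle (1 : ℝ)) (b : G) :=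
        (continuous_apply _).comp continuous_subtype_val
      have heq : Set.EqOn (fun f : A => (f : G → AddCircle (1 : ℝ)) (a : G))
          (fun f : A => (f : G → AddCircle (1 : ℝ)) (b : G)) D := by
        intro d hd
        exact congrFun hab ⟨d, hd⟩
      have := Continuous.ext_on hDdense hc1 hc2 heq
      exact fun f => congrFun this f
    by_contra hne
    have hsub : (a : G) - (b : G) ≠ 0 := sub_ne_zero.mpr (fun h => hne (Subtype.ext h))
    obtain ⟨χ, hχ⟩ := exists_char hsub
    apply hχ
    have := key ⟨⇑χ, hmem χ⟩
    have h' : χ (a : G) = χ (b : G) := this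
    rw [map_sub, h', sub_self]
  have hq : Topology.IsClosedEmbedding q := hqcont.isClosedEmbedding hqinj
  haveI : FirstCountableTopology K := hq.isEmbedding.firstCountableTopology
  -- extract a convergent subsequence
  let y : ℕ → K := fun n => ⟨x n, hxK n⟩
  obtain ⟨a, φ, hφ, hconv⟩ := CompactSpace.tendsto_subseq y
  have hconvG : Filter.Tendsto (fun k => x (φ k)) atTop (@nhds G tG (a : G)) :=
    (continuous_subtype_val.tendsto a).comp hconv
  -- pointwise convergence of characters
  have hpt : ∀ f : A, Filter.Tendsto (fun k => (f : G → AddCircle (1 : ℝ)) (x (φ k)))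
      atTop (nhds ((f : G → AddCircle (1 : ℝ)) (a : G))) := by
    intro f
    exact ((hcont f).tendsto _).comp hconvG
  -- dominated convergence
  let F : ℕ → A → ℂ := fun k f => e (x (φ k) - (a : G)) f
  have hFconv : ∀ f : A, Filter.Tendsto (fun k => F k f) atTop (nhds 1) := by
    intro f
    have h1 : Filter.Tendsto (fun k => (f : G → AddCircle (1 : ℝ)) (x (φ k))
        - (f : G → AddCircle (1 : ℝ)) (a : G)) atTop (nhds 0) := by
      have := (hpt f).sub
        (tendsto_const_nhds (x := (f : G → AddCircle (1 : ℝ)) (a : G)) (f := atTop))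
      simpa using this
    have h2 : ∀ k, F k f = (AddCircle.toCircle ((f : G → AddCircle (1 : ℝ)) (x (φ k))
        - (f : G → AddCircle (1 : ℝ)) (a : G)) : ℂ) := by
      intro k
      have h := f.2 (x (φ k) - (a : G)) (a : G)
      rw [sub_add_cancel] at h
      show (AddCircle.toCircle ((f : G → AddCircle (1 : ℝ)) (x (φ k) - (a : G))) : ℂ) = _
      rw [eq_sub_of_add_eq h.symm]
    simp_rw [h2]
    have : Filter.Tendsto (fun z : AddCircle (1 : ℝ) => (AddCircle.toCircle z : ℂ))
        (nhds 0) (nhds 1) := by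
      have hc : Continuous fun z : AddCircle (1 : ℝ) => (AddCircle.toCircle z : ℂ) :=
        continuous_subtype_val.comp AddCircle.continuous_toCircle
      have := hc.tendsto 0
      simpa [AddCircle.toCircle_zero] using this
    exact this.comp h1
  have hDCT : Filter.Tendsto (fun k => ∫ f, F k f ∂μ) atTop (nhds (∫ _f, (1 : ℂ) ∂μ)) := by
    apply tendsto_integral_of_dominated_convergence (fun _ => (1 : ℝ))
    · exact fun k => (he_cont _).aestronglyMeasurable
    · exact integrable_const 1
    · exact fun k => Filter.Eventually.of_forall fun f => le_of_eq (he_norm _ f)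
    · exact Filter.Eventually.of_forall fun f => hFconv f
  have hlim : (∫ _f, (1 : ℂ) ∂μ) = 1 := by
    rw [integral_const]
    simp [hμuniv, measureReal_def]
  -- but the integrals are eventually zero
  have hbad : ∀ᶠ k in atTop, (∫ f, F k f ∂μ) = 0 := by
    have hsing : ∀ k1 k2, x (φ k1) = (a : G) → x (φ k2) = (a : G) → k1 = k2 := by
      intro k1 k2 h1 h2
      exact hφ.injective (hxinj (h1.trans h2.symm))
    rcases Classical.em (∃ k0, x (φ k0) = (a : G)) with ⟨k0, hk0⟩ | hnone
    · refine Filter.eventually_atTop.mpr ⟨k0 + 1, fun k hk => ?_⟩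
      apply hint0
      intro h
      have : x (φ k) = (a : G) := by
        have := sub_eq_zero.mp h
        exact this
      exact absurd (hsing k k0 this hk0) (by omega)
    · refine Filter.Eventually.of_forall fun k => ?_
      apply hint0
      intro h
      exact hnone ⟨k, sub_eq_zero.mp h⟩
  have hzero : Filter.Tendsto (fun k => ∫ f, F k f ∂μ) atTop (nhds 0) :=
    Filter.Tendsto.congr' (hbad.mono fun k hk => hk.symm) tendsto_const_nhds
  have h10 : (1 : ℂ) = 0 := by
    have := tendsto_nhds_unique hDCT hzero
    rw [hlim] at this
    exact this
  exact one_ne_zero h10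

end BohrAux

/-- For every abelian group `G`, every compact subset of `G^#` is finite. -/
theorem bohr_isCompact_finite (G : Type*) [AddCommGroup G] :
    letI := bohrTopology G
    ∀ K : Set G, IsCompact K → K.Finite := by
  letI tG := bohrTopology G
  intro K hK
  by_contra hfin
  have hinf : K.Infinite := hfin
  -- the countable subgroup generated by a countable infinite subset of K
  let x : ℕ → G := fun n => (Set.Infinite.natEmbedding K hinf n : G)
  have hxK : ∀ n, x n ∈ K := fun n => (Set.Infinite.natEmbedding K hinf n).2
  have hxinj : Function.Injective x :=
    Subtype.coe_injective.comp (Set.Infinite.natEmbedding K hinf).injective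
  let Φ : (ℕ →₀ ℤ) →+ G := Finsupp.liftAddHom fun n => zmultiplesHom G (x n)
  let H : AddSubgroup G := Φ.range
  haveI hHcount : Countable H := by
    have h := Set.countable_range ⇑Φ
    rw [← AddMonoidHom.coe_range] at h
    exact h.to_subtype
  have hxH : ∀ n, x n ∈ H := by
    intro n
    refine ⟨Finsupp.single n 1, ?_⟩
    simp [Φ]
  -- K ∩ H is compact and infinite
  have hKH_compact : IsCompact (K ∩ (H : Set G)) :=
    hK.inter_right (BohrAux.subgroup_isClosed H)
  have hKH_inf : (K ∩ (H : Set G)).Infinite :=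
    Set.infinite_of_injective_forall_mem hxinj fun n => ⟨hxK n, hxH n⟩
  -- pull back to the subgroup H with its own Bohr topology
  letI tH := bohrTopology H
  have hemb : @Topology.IsEmbedding H G tH tG H.subtype :=
    ⟨⟨BohrAux.bohr_induced H⟩, Subtype.coe_injective⟩
  have hsub : K ∩ (H : Set G) ⊆ Set.range H.subtype := by
    intro z hz
    exact ⟨⟨z, hz.2⟩, rfl⟩
  have himage : H.subtype '' (H.subtype ⁻¹' (K ∩ (H : Set G))) = K ∩ (H : Set G) :=
    Set.image_preimage_eq_of_subset hsub
  have hK'compact : @IsCompact H tH (H.subtype ⁻¹' (K ∩ (H : Set G))) := by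
    rw [hemb.isCompact_iff, himage]
    exact hKH_compact
  have hK'inf : (H.subtype ⁻¹' (K ∩ (H : Set G))).Infinite :=
    hKH_inf.preimage hsub
  exact BohrAux.countable_case hK'compact hK'inf
end

section
/- For every abelian group G, every sequence in G^# that converges to a point of G^# is eventually constant; that is, the only convergent sequences in G^# are the trivial ones. -/
open scoped Pointwise

open Filter MeasureTheory
open scoped DirectSum

instance bohrFactZeroLtOne : Fact ((0:ℝ) < 1) := ⟨one_pos⟩



lemma bohr_ext {M N : Type*} [AddCommGroup M] [AddCommGroup N] (f : M →+ N)
    (hf : Function.Injective f) (g : M →+ AddCircle (1 : ℝ)) :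
    ∃ h : N →+ AddCircle (1 : ℝ), ∀ m, h (f m) = g m := by
  obtain ⟨h, hh⟩ := (Module.Baer.of_divisible _).extension_property_addMonoidHom f hf g
  exact ⟨h, fun m => DFunLike.congr_fun hh m⟩

lemma quarter_le_norm {y : ℝ} (h1 : 1/4 ≤ y) (h2 : y ≤ 3/4) :
    (1/4 : ℝ) ≤ ‖((y : ℝ) : AddCircle (1 : ℝ))‖ := by
  rw [show ((y : ℝ) : AddCircle (1:ℝ)) = (y : UnitAddCircle) from rfl, UnitAddCircle.norm_eq]
  rcases le_or_gt (round y) 0 with h | h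
  · have : ((round y : ℤ) : ℝ) ≤ 0 := by exact_mod_cast h
    rw [abs_of_nonneg (by linarith)]; linarith
  · have : (1 : ℝ) ≤ ((round y : ℤ) : ℝ) := by exact_mod_cast h
    rw [abs_of_nonpos (by linarith)]; linarith

/-- Key step: given any value `a` and nonzero `q`, there is a character shifting `a` away from 0. -/
lemma exists_char_shift {Q : Type*} [AddCommGroup Q] (q : Q) (hq : q ≠ 0) (a : AddCircle (1 : ℝ)) :
    ∃ φ : Q →+ AddCircle (1 : ℝ), (1/4 : ℝ) ≤ ‖a + φ q‖ := by
  by_cases hn : addOrderOf q = 0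
  · -- infinite order
    set t : AddCircle (1:ℝ) := ((1/2 : ℝ) : AddCircle (1:ℝ)) - a with ht
    have hinj : Function.Injective (zmultiplesHom Q q) := by
      intro m m' h
      simp only [zmultiplesHom_apply] at h
      by_contra hne
      have h0 : (m - m') • q = 0 := by rw [sub_zsmul, h]; abel
      have : IsOfFinAddOrder q := (isOfFinAddOrder_iff_zsmul_eq_zero).mpr
        ⟨m - m', sub_ne_zero.mpr hne, h0⟩
      exact (addOrderOf_eq_zero_iff.mp hn) this
    obtain ⟨φ, hφ⟩ := bohr_ext (zmultiplesHom Q q) hinj (zmultiplesHom _ t)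
    refine ⟨φ, ?_⟩
    have h1 : φ q = t := by
      have := hφ 1
      simpa using this
    rw [h1, ht, add_sub_cancel]
    exact quarter_le_norm (by norm_num) (by norm_num)
  · -- finite order n ≥ 2
    set n := addOrderOf q with hdef
    have hn1 : n ≠ 1 := by
      intro h
      exact hq (AddMonoid.addOrderOf_eq_one_iff.mp h)
    have hn2 : 2 ≤ n := by omega
    obtain ⟨a₀, rfl⟩ := QuotientAddGroup.mk_surjective a
    set j : ℤ := round ((n : ℝ) * (1/2 - a₀)) with hj
    have hzq : (zmultiplesHom Q q) (n : ℤ) = 0 := by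
      rw [zmultiplesHom_apply, natCast_zsmul]; exact addOrderOf_nsmul_eq_zero q
    have hzt : (zmultiplesHom (AddCircle (1:ℝ)) (((j : ℝ)/(n:ℝ) : ℝ) : AddCircle (1:ℝ))) (n : ℤ) = 0 := by
      simp only [zmultiplesHom_apply]
      rw [← AddCircle.coe_zsmul]
      rw [AddCircle.coe_eq_zero_iff]
      refine ⟨j, ?_⟩
      have hn0 : (n : ℝ) ≠ 0 := by positivity
      simp only [zsmul_eq_mul, smul_eq_mul]
      field_simp
      norm_cast
    set f : ZMod n →+ Q := ZMod.lift n ⟨zmultiplesHom Q q, hzq⟩ with hf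
    set g : ZMod n →+ AddCircle (1:ℝ) := ZMod.lift n ⟨_, hzt⟩ with hg
    have hinj : Function.Injective f := by
      rw [hf, ZMod.lift_injective]
      intro m hm
      simp only [zmultiplesHom_apply] at hm
      rw [ZMod.intCast_zmod_eq_zero_iff_dvd]
      exact (addOrderOf_dvd_iff_zsmul_eq_zero).mpr hm
    obtain ⟨φ, hφ⟩ := bohr_ext f hinj g
    refine ⟨φ, ?_⟩
    have hq1 : f 1 = q := by
      rw [hf, show (1 : ZMod n) = ((1 : ℤ) : ZMod n) by norm_cast, ZMod.lift_coe]
      simp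
    have hφq : φ q = (((j : ℝ)/(n:ℝ) : ℝ) : AddCircle (1:ℝ)) := by
      rw [← hq1, hφ 1, hg, show (1 : ZMod n) = ((1 : ℤ) : ZMod n) by norm_cast, ZMod.lift_coe]
      simp
    rw [hφq, ← AddCircle.coe_add]
    have hround : |(n : ℝ) * (1/2 - a₀) - j| ≤ 1/2 := abs_sub_round _
    have hn0 : (0:ℝ) < (n : ℝ) := by positivity
    have hb : |a₀ + (j:ℝ)/(n:ℝ) - 1/2| ≤ 1/4 := by
      have e1 : a₀ + (j:ℝ)/(n:ℝ) - 1/2 = -(((n : ℝ) * (1/2 - a₀) - j)) / n := by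
        field_simp; ring
      rw [e1, abs_div, abs_neg, abs_of_pos hn0]
      rw [div_le_iff₀ hn0]
      have : (2:ℝ) ≤ (n:ℝ) := by exact_mod_cast hn2
      nlinarith [abs_nonneg ((n : ℝ) * (1/2 - a₀) - j)]
    have := abs_le.mp hb
    exact quarter_le_norm (by linarith [this.1]) (by linarith [this.2])



/-- There is a real `t` witnessing non-convergence to `0` of `m j * t` mod 1,
for any sequence of nonzero integers. -/
lemma exists_real_not_tendsto (m : ℕ → ℤ) (hm : ∀ j, m j ≠ 0) :
    ∃ t : ℝ, ¬ Tendsto (fun j => (((m j : ℝ) * t : ℝ) : AddCircle (1:ℝ))) atTop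
      (nhds 0) := by
  by_contra hcon
  push_neg at hcon
  -- all integrals of fourier (m j) vanish
  have h0 : ∀ j, ∫ x : AddCircle (1:ℝ), fourier (m j) x ∂AddCircle.haarAddCircle = 0 := by
    intro j
    exact integral_eq_zero_of_add_right_eq_neg (μ := AddCircle.haarAddCircle)
      (fourier_add_half_inv_index (hm j) one_pos)
  -- pointwise convergence to 1
  have hpt : ∀ x : AddCircle (1:ℝ),
      Tendsto (fun j => (fourier (m j) x : ℂ)) atTop (nhds 1) := by
    intro x
    obtain ⟨r, rfl⟩ := QuotientAddGroup.mk_surjective x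
    have he : ∀ j, (fourier (m j) (r : AddCircle (1:ℝ)) : ℂ)
        = (AddCircle.toCircle ((((m j : ℝ) * r : ℝ)) : AddCircle (1:ℝ)) : ℂ) := by
      intro j
      rw [fourier_apply]
      congr 1
      rw [← AddCircle.coe_zsmul]
      rw [zsmul_eq_mul]
    simp_rw [he]
    have hc : Continuous fun y : AddCircle (1:ℝ) => (AddCircle.toCircle y : ℂ) :=
      continuous_induced_dom.comp AddCircle.continuous_toCircle
    have := (hc.tendsto 0).comp (hcon r)
    have h2 : (AddCircle.toCircle (0 : AddCircle (1:ℝ)) : ℂ) = 1 := fourier_zero' (T := 1)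
    simpa only [Function.comp_def, h2] using this
  -- dominated convergence
  have hdct : Tendsto (fun j => ∫ x : AddCircle (1:ℝ), fourier (m j) x ∂AddCircle.haarAddCircle)
      atTop (nhds (∫ _x : AddCircle (1:ℝ), (1:ℂ) ∂AddCircle.haarAddCircle)) := by
    refine tendsto_integral_of_dominated_convergence (fun _ => (1:ℝ))
      (fun j => (map_continuous (fourier (m j))).aestronglyMeasurable)
      (integrable_const _) (fun j => ?_) ?_
    · refine Eventually.of_forall fun x => ?_
      rw [fourier_apply]
      exact (Circle.norm_coe _).le
    · exact Eventually.of_forall hpt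
  have h1 : (∫ _x : AddCircle (1:ℝ), (1:ℂ) ∂AddCircle.haarAddCircle) = 1 := by
    simp
  rw [h1] at hdct
  simp_rw [h0] at hdct
  exact zero_ne_one (tendsto_nhds_unique tendsto_const_nhds hdct)

private def bohrPS {G : Type*} [AddCommGroup G] [DecidableEq G] (K : Finset G → ℕ) (v : ℕ → G) :
    ℕ → Finset G
  | 0 => ∅
  | (m+1) => insert (v (K (bohrPS K v m))) (bohrPS K v m)

lemma bohr_main {G : Type*} [AddCommGroup G] (v : ℕ → G) (hv : ∀ k, v k ≠ 0)
    (hten : ∀ χ : G →+ AddCircle (1:ℝ), Tendsto (fun k => χ (v k)) atTop (nhds 0)) :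
    False := by
  classical
  by_cases hA : ∀ s : Finset G, ∃ k, v k ∉ AddSubgroup.closure (s : Set G)
  · -- Case A : recursive construction of an independent-ish subsequence
    choose K hK using hA
    set PS : ℕ → Finset G := bohrPS K v with hPSdef
    set w : ℕ → G := fun m => v (K (PS m)) with hwdef
    have hPS : ∀ m, PS (m+1) = insert (w m) (PS m) := fun m => rfl
    have hw : ∀ m, w m ∉ AddSubgroup.closure (PS m : Set G) := fun m => hK (PS m)
    have hmem : ∀ j m, j < m → w j ∈ PS m := by
      intro j m hjm
      induction m with
      | zero => omega
      | succ m ih =>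
        rw [hPS]
        rcases Nat.lt_succ_iff_lt_or_eq.mp hjm with h | h
        · exact Finset.mem_insert_of_mem (ih h)
        · subst h; exact Finset.mem_insert_self _ _
    have hwinj : Function.Injective w := by
      intro m1 m2 h
      by_contra hne
      rcases lt_trichotomy m1 m2 with h' | h' | h'
      · exact hw m2 (h ▸ AddSubgroup.subset_closure (hmem m1 m2 h'))
      · exact hne h'
      · exact hw m1 (h ▸ AddSubgroup.subset_closure (hmem m2 m1 h'))
    set C : ℕ → Set (G → AddCircle (1:ℝ)) := fun m =>
      {f | (∀ x y, f (x+y) = f x + f y) ∧ ∀ j < m, (1/4:ℝ) ≤ ‖f (w j)‖} with hC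
    have hhomclosed : IsClosed {f : G → AddCircle (1:ℝ) | ∀ x y, f (x+y) = f x + f y} := by
      have : {f : G → AddCircle (1:ℝ) | ∀ x y, f (x+y) = f x + f y} =
          ⋂ (x) (y), {f | f (x+y) = f x + f y} := by ext f; simp
      rw [this]
      exact isClosed_iInter fun x => isClosed_iInter fun y =>
        isClosed_eq (continuous_apply _) ((continuous_apply x).add (continuous_apply y))
    have hclosed : ∀ m, IsClosed (C m) := by
      intro m
      have : C m = {f : G → AddCircle (1:ℝ) | ∀ x y, f (x+y) = f x + f y} ∩
          ⋂ j ∈ Finset.range m, {f : G → AddCircle (1:ℝ) | (1/4:ℝ) ≤ ‖f (w j)‖} := by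
        ext f; simp [hC]
      rw [this]
      exact hhomclosed.inter (isClosed_biInter fun j _ =>
        isClosed_le continuous_const ((continuous_apply _).norm))
    have hne : ∀ m, (C m).Nonempty := by
      intro m
      induction m with
      | zero =>
        exact ⟨fun _ => 0, fun x y => by simp, fun j hj => absurd hj (Nat.not_lt_zero j)⟩
      | succ m ih =>
        obtain ⟨f, hf1, hf2⟩ := ih
        set H := AddSubgroup.closure (PS m : Set G) with hH
        have hq : (QuotientAddGroup.mk (w m) : G ⧸ H) ≠ 0 := by
          rw [Ne, QuotientAddGroup.eq_zero_iff]
          exact hw m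
        obtain ⟨φ, hφ⟩ := exists_char_shift _ hq (f (w m))
        refine ⟨fun x => f x + φ (QuotientAddGroup.mk x), fun x y => ?_, fun j hj => ?_⟩
        · show f (x + y) + φ (QuotientAddGroup.mk (x + y)) =
              (f x + φ (QuotientAddGroup.mk x)) + (f y + φ (QuotientAddGroup.mk y))
          rw [hf1 x y, QuotientAddGroup.mk_add, map_add]; abel
        · rcases Nat.lt_succ_iff_lt_or_eq.mp hj with h | h
          · have h0 : (QuotientAddGroup.mk (w j) : G ⧸ H) = 0 :=
              (QuotientAddGroup.eq_zero_iff _).mpr (AddSubgroup.subset_closure (hmem j m h))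
            show (1/4:ℝ) ≤ ‖f (w j) + φ (QuotientAddGroup.mk (w j))‖
            rw [h0, map_zero, add_zero]
            exact hf2 j h
          · subst h; exact hφ
    obtain ⟨f, hf⟩ := IsCompact.nonempty_iInter_of_sequence_nonempty_isCompact_isClosed C
      (fun m g hg => ⟨hg.1, fun j hj => hg.2 j (Nat.lt_succ_of_lt hj)⟩)
      hne ((hclosed 0).isCompact) hclosed
    have hfC : ∀ m, f ∈ C m := fun m => Set.mem_iInter.mp hf m
    let χ : G →+ AddCircle (1:ℝ) := AddMonoidHom.mk' f (hfC 0).1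
    have h4 : ∀ᶠ k in atTop, ‖χ (v k)‖ < 1/4 := by
      have := Metric.tendsto_nhds.mp (hten χ) (1/4) (by norm_num)
      filter_upwards [this] with k hk
      rwa [dist_zero_right] at hk
    obtain ⟨N, hN⟩ := eventually_atTop.mp h4
    have hinf : (Set.range fun m => K (PS m)).Infinite :=
      Set.infinite_range_of_injective (fun m1 m2 h => hwinj (congrArg v h))
    obtain ⟨k, hkmem, hklt⟩ := hinf.exists_gt N
    obtain ⟨m, rfl⟩ := hkmem
    have hlt := hN _ (le_of_lt hklt)
    have hge : (1/4:ℝ) ≤ ‖χ (v (K (PS m)))‖ := (hfC (m+1)).2 m (Nat.lt_succ_self m)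
    linarith
  · push_neg at hA
    obtain ⟨s, hs⟩ := hA
    by_cases hB : ∃ c : G, c ≠ 0 ∧ {k | v k = c}.Infinite
    · obtain ⟨c, hc0, hcinf⟩ := hB
      obtain ⟨φ, hφ⟩ := exists_char_shift c hc0 0
      rw [zero_add] at hφ
      have h4 : ∀ᶠ k in atTop, ‖φ (v k)‖ < 1/4 := by
        have := Metric.tendsto_nhds.mp (hten φ) (1/4) (by norm_num)
        filter_upwards [this] with k hk
        rwa [dist_zero_right] at hk
      obtain ⟨N, hN⟩ := eventually_atTop.mp h4
      obtain ⟨k, hkmem, hklt⟩ := hcinf.exists_gt N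
      have := hN k hklt.le
      rw [show v k = c from hkmem] at this
      linarith
    · push_neg at hB
      have hfin : ∀ F : Set G, F.Finite → {k | v k ∈ F}.Finite := by
        intro F hF
        have hsub : {k | v k ∈ F} ⊆ ⋃ c ∈ F, {k | v k = c} := fun k hk =>
          Set.mem_biUnion hk rfl
        refine Set.Finite.subset (Set.Finite.biUnion hF fun c _ => ?_) hsub
        by_cases hc : c = 0
        · subst hc
          refine Set.Finite.subset (Set.finite_empty) ?_
          intro k hk
          exact absurd hk (hv k)
        · exact hB c hc
      set H := AddSubgroup.closure (s : Set G) with hH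
      haveI : AddGroup.FG ↥H := (AddGroup.fg_iff_addSubgroup_fg H).mpr ⟨s, rfl⟩
      obtain ⟨n, ι, hι, p, hp, e, ⟨eqv⟩⟩ := AddCommGroup.equiv_free_prod_directSum_zmod ↥H
      haveI : ∀ i, NeZero (p i ^ e i) := fun i => ⟨pow_ne_zero _ (hp i).pos.ne'⟩
      haveI : Finite (⨁ i, ZMod (p i ^ e i)) := by
        letI := Classical.decEq ι
        haveI : ∀ i, Fintype (ZMod (p i ^ e i)) := fun i => ZMod.fintype _
        unfold DirectSum
        exact Finite.of_fintype _
      let a : ℕ → (Fin n →₀ ℤ) := fun k => (eqv ⟨v k, hs k⟩).1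
      have hbox : ∀ M : ℕ, {x : Fin n →₀ ℤ | ∀ i, |x i| ≤ (M:ℤ)}.Finite := by
        intro M
        have hsub : {x : Fin n →₀ ℤ | ∀ i, |x i| ≤ (M:ℤ)} ⊆
            Finsupp.equivFunOnFinite ⁻¹' (Set.pi Set.univ fun _ : Fin n =>
              Set.Icc (-(M:ℤ)) (M:ℤ)) := by
          intro x hx
          intro i _
          exact abs_le.mp (hx i)
        refine Set.Finite.subset ?_ hsub
        exact Set.Finite.preimage (Set.injOn_of_injective Finsupp.equivFunOnFinite.injective)
          (Set.Finite.pi fun _ => Set.finite_Icc _ _)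
      have hkbox : ∀ M : ℕ, {k | ∀ i, |a k i| ≤ (M:ℤ)}.Finite := by
        intro M
        have hsub : {k | ∀ i, |a k i| ≤ (M:ℤ)} ⊆
            {k | v k ∈ Subtype.val '' (⇑eqv ⁻¹'
              ({x : Fin n →₀ ℤ | ∀ i, |x i| ≤ (M:ℤ)} ×ˢ (Set.univ : Set (⨁ i, ZMod (p i ^ e i))))) } := by
          intro k hk
          exact ⟨⟨v k, hs k⟩, ⟨hk, Set.mem_univ _⟩, rfl⟩
        refine Set.Finite.subset (hfin _ ?_) hsub
        refine Set.Finite.image _ ?_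
        exact Set.Finite.preimage (Set.injOn_of_injective eqv.injective)
          ((hbox M).prod Set.finite_univ)
      have hcoord : ∃ i : Fin n, ∀ M : ℕ, {k | (M:ℤ) < |a k i|}.Infinite := by
        by_contra hcon
        push_neg at hcon
        choose Mi hMi using hcon
        set M : ℕ := Finset.univ.sup Mi with hM
        have hSfin : (⋃ i, {k | (M:ℤ) < |a k i|}).Finite := by
          refine Set.finite_iUnion fun i => Set.Finite.subset (hMi i) ?_
          intro k hk
          have : ((Mi i : ℕ) : ℤ) ≤ (M:ℤ) := by
            exact_mod_cast Finset.le_sup (Finset.mem_univ i)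
          exact lt_of_le_of_lt this hk
        have : (Set.univ : Set ℕ).Finite := by
          refine Set.Finite.subset (hSfin.union (hkbox M)) ?_
          intro k _
          by_cases hk : ∃ i, (M:ℤ) < |a k i|
          · obtain ⟨i, hi⟩ := hk
            exact Set.mem_union_left _ (Set.mem_iUnion.mpr ⟨i, hi⟩)
          · push_neg at hk
            exact Set.mem_union_right _ hk
        exact Set.infinite_univ this
      obtain ⟨i, hi⟩ := hcoord
      obtain ⟨φ, hφmono, hφ⟩ := Filter.extraction_forall_of_frequently
        (fun M => Nat.frequently_atTop_iff_infinite.mpr (hi M))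
      have hnz : ∀ j, a (φ j) i ≠ 0 := by
        intro j h0
        have := hφ j
        rw [h0] at this
        simp only [abs_zero] at this
        omega
      obtain ⟨t, hT⟩ := exists_real_not_tendsto (fun j => a (φ j) i) hnz
      let f1 : ↥H →+ ℤ := (Finsupp.applyAddHom i).comp
        ((AddMonoidHom.fst _ _).comp eqv.toAddMonoidHom)
      let ρ : ↥H →+ AddCircle (1:ℝ) :=
        (QuotientAddGroup.mk' _).comp ((zmultiplesHom ℝ t).comp f1)
      obtain ⟨χ, hχ⟩ := bohr_ext H.subtype H.subtype_injective ρ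
      apply hT
      have h2 := (hten χ).comp hφmono.tendsto_atTop
      refine h2.congr fun j => ?_
      show χ (v (φ j)) = _
      have hv1 : v (φ j) = H.subtype ⟨v (φ j), hs (φ j)⟩ := rfl
      rw [hv1, hχ]
      show (((f1 ⟨v (φ j), hs (φ j)⟩ : ℤ) • t : ℝ) : AddCircle (1:ℝ)) = _
      rw [zsmul_eq_mul]
      rfl


/-- For every abelian group `G`, every convergent sequence in `G^#` is eventually constant. -/
theorem bohr_convergent_seq_eventually_const (G : Type*) [AddCommGroup G] :
    letI := bohrTopology G
    ∀ (u : ℕ → G) (x : G), Filter.Tendsto u Filter.atTop (nhds x) →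
      ∀ᶠ n in Filter.atTop, u n = x := by
  letI := bohrTopology G
  intro u x hu
  by_contra hcon
  rw [Filter.not_eventually] at hcon
  obtain ⟨φ, hφmono, hφ⟩ := Filter.extraction_of_frequently_atTop hcon
  have hchar : ∀ χ : G →+ AddCircle (1:ℝ),
      Filter.Tendsto (fun k => χ (u (φ k) - x)) Filter.atTop (nhds 0) := by
    intro χ
    have hcont : Continuous χ := by
      rw [continuous_iff_le_induced]
      show bohrTopology G ≤ _
      exact iInf_le _ χ
    have h1 : Filter.Tendsto (fun n => χ (u n)) Filter.atTop (nhds (χ x)) :=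
      (hcont.tendsto x).comp hu
    have h2 := (h1.comp hφmono.tendsto_atTop).sub_const (χ x)
    have h3 : (fun k => χ (u (φ k) - x)) = fun k => χ (u (φ k)) - χ x := by
      funext k; rw [map_sub]
    rw [h3]
    simpa using h2
  exact bohr_main (fun k => u (φ k) - x) (fun k => sub_ne_zero.mpr (hφ k)) hchar
end

section
/- For every infinite cardinal κ, the set [κ]^2 (the set of elements of B_κ whose support has exactly two elements) is relatively discrete in B_κ^# but is not closed in B_κ^#; indeed, 0 lies in the closure of [κ]^2 in B_κ^#. -/
open scoped Pointwise

noncomputable def half : AddCircle (1:ℝ) := ((1/2 : ℝ) : AddCircle (1:ℝ))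

lemma half_add_half : half + half = 0 := by
  rw [half, ← AddCircle.coe_add]; norm_num

lemma half_ne_zero : half ≠ 0 := by
  rw [half, Ne, AddCircle.coe_eq_zero_iff]
  rintro ⟨n, hn⟩
  have : (n:ℝ) = 1/2 := by simpa using hn
  have h2 : (2*n : ℤ) = 1 := by exact_mod_cast (by linarith : (2*(n:ℝ)) = 1)
  omega

lemma torsion_dichotomy (y : AddCircle (1:ℝ)) (h : y + y = 0) : y = 0 ∨ y = half := by
  induction y using QuotientAddGroup.induction_on with
  | H x =>
  rw [← AddCircle.coe_add, AddCircle.coe_eq_zero_iff] at h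
  obtain ⟨n, hn⟩ := h
  have hx : x = n / 2 := by simp at hn; linarith
  rcases Int.even_or_odd n with ⟨m, hm⟩ | ⟨m, hm⟩
  · left
    rw [AddCircle.coe_eq_zero_iff]
    refine ⟨m, by rw [hx, hm]; push_cast [zsmul_eq_mul]; ring⟩
  · right
    have h0 : ((x - 1/2 : ℝ) : AddCircle (1:ℝ)) = 0 :=
      (AddCircle.coe_eq_zero_iff _).2 ⟨m, by rw [hx, hm]; push_cast [zsmul_eq_mul]; ring⟩
    rw [AddCircle.coe_sub, sub_eq_zero] at h0
    exact h0

lemma two_zsmul_half : (zmultiplesHom _ half) (2:ℤ) = 0 := by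
  simp [zmultiplesHom, two_zsmul, half_add_half]

noncomputable def phi : ZMod 2 →+ AddCircle (1:ℝ) :=
  ZMod.lift 2 ⟨zmultiplesHom _ half, two_zsmul_half⟩

lemma phi_one : phi 1 = half := by
  have := ZMod.lift_coe (n := 2) ⟨zmultiplesHom _ half, two_zsmul_half⟩ 1
  simpa [phi] using this

lemma phi_ne_zero_iff (a : ZMod 2) : phi a ≠ 0 ↔ a = 1 := by
  have h : a = 0 ∨ a = 1 := by revert a; decide
  rcases h with rfl | rfl
  · simp
  · simp [phi_one, half_ne_zero]

lemma zmod_eq_one {a : ZMod 2} (h : a ≠ 0) : a = 1 := by revert a h; decide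

section Main
variable {κ : Type*}

lemma self_add_self (x : κ →₀ ZMod 2) : x + x = 0 := by
  ext a; simp [CharTwo.add_self_eq_zero]

noncomputable def chiAt (γ : κ) : (κ →₀ ZMod 2) →+ AddCircle (1:ℝ) :=
  phi.comp (Finsupp.applyAddHom γ)

lemma chiAt_apply (γ : κ) (y : κ →₀ ZMod 2) : chiAt γ y = phi (y γ) := rfl

end Main


/-- In the Boolean group `B_κ = ⊕_κ ℤ/2ℤ` with the Bohr topology, the set `[κ]^2`
(elements of support of size two) is relatively discrete but not closed;
indeed `0` lies in its closure. -/
theorem bohr_pairs_discrete_not_closed (κ : Type*) [Infinite κ] :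
    letI := bohrTopology (κ →₀ ZMod 2)
    DiscreteTopology {x : κ →₀ ZMod 2 | x.support.card = 2} ∧
    ¬ IsClosed {x : κ →₀ ZMod 2 | x.support.card = 2} ∧
    (0 : κ →₀ ZMod 2) ∈ closure {x : κ →₀ ZMod 2 | x.support.card = 2} := by
  classical
  letI := bohrTopology (κ →₀ ZMod 2)
  set S : Set (κ →₀ ZMod 2) := {x : κ →₀ ZMod 2 | x.support.card = 2} with hS
  have hcont : ∀ χ : (κ →₀ ZMod 2) →+ AddCircle (1:ℝ), Continuous χ := by
    intro χ
    show @Continuous _ _ (bohrTopology (κ →₀ ZMod 2)) _ χ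
    rw [bohrTopology]
    exact continuous_iInf_dom continuous_induced_dom
  -- torsion of character values
  have htor : ∀ (χ : (κ →₀ ZMod 2) →+ AddCircle (1:ℝ)) (x : κ →₀ ZMod 2),
      χ x = 0 ∨ χ x = half := by
    intro χ x
    refine torsion_dichotomy _ ?_
    rw [← map_add, self_add_self, map_zero]
  -- discreteness
  have hdisc : DiscreteTopology S := by
    refine discreteTopology_iff_isOpen_singleton.mpr ?_
    rintro ⟨x, hx⟩
    obtain ⟨α, β, hab, hsup⟩ := Finset.card_eq_two.mp hx
    refine isOpen_induced_iff.mpr ⟨(chiAt α)⁻¹' {0}ᶜ ∩ (chiAt β)⁻¹' {0}ᶜ, ?_, ?_⟩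
    · exact ((isOpen_compl_singleton.preimage (hcont _)).inter
        (isOpen_compl_singleton.preimage (hcont _)))
    · ext ⟨y, hy⟩
      simp only [Set.mem_preimage, Set.mem_inter_iff, Set.mem_compl_iff,
        Set.mem_singleton_iff, chiAt_apply]
      constructor
      · rintro ⟨h1, h2⟩
        have hyα : y α = 1 := (phi_ne_zero_iff _).mp h1
        have hyβ : y β = 1 := (phi_ne_zero_iff _).mp h2
        have hsub : ({α, β} : Finset κ) ⊆ y.support := by
          intro γ hγ
          rcases Finset.mem_insert.mp hγ with rfl | hγ
          · exact Finsupp.mem_support_iff.mpr (by rw [hyα]; exact one_ne_zero)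
          · rw [Finset.mem_singleton] at hγ; subst hγ
            exact Finsupp.mem_support_iff.mpr (by rw [hyβ]; exact one_ne_zero)
        have hysup : y.support = {α, β} :=
          (Finset.eq_of_subset_of_card_le hsub (by
            rw [hy]; rw [Finset.card_pair hab])).symm
        have hxy : y = x := by
          ext γ
          by_cases hγ : γ ∈ ({α, β} : Finset κ)
          · rcases Finset.mem_insert.mp hγ with hγ' | hγ'
            · rw [hγ', hyα]
              exact (zmod_eq_one (Finsupp.mem_support_iff.mp
                (hsup ▸ Finset.mem_insert_self α {β}))).symm
            · rw [Finset.mem_singleton] at hγ'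
              rw [hγ', hyβ]
              refine (zmod_eq_one (Finsupp.mem_support_iff.mp ?_)).symm
              rw [hsup]
              exact Finset.mem_insert_of_mem (Finset.mem_singleton_self _)
          · have h1 : y γ = 0 := by
              by_contra h
              exact hγ (hysup ▸ Finsupp.mem_support_iff.mpr h)
            have h2 : x γ = 0 := by
              by_contra h
              exact hγ (hsup ▸ Finsupp.mem_support_iff.mpr h)
            rw [h1, h2]
          -- done
        exact Subtype.ext hxy
      · intro h
        have hxy : y = x := by simpa using h
        subst hxy
        have hyα : y α = 1 := zmod_eq_one (Finsupp.mem_support_iff.mp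
          (hsup ▸ Finset.mem_insert_self α {β}))
        have hyβ : y β = 1 := by
          refine zmod_eq_one (Finsupp.mem_support_iff.mp ?_)
          rw [hsup]; exact Finset.mem_insert_of_mem (Finset.mem_singleton_self _)
        constructor
        · rw [hyα, phi_one]; exact half_ne_zero
        · rw [hyβ, phi_one]; exact half_ne_zero
  -- nhds of zero
  have hnhds : (nhds (0 : κ →₀ ZMod 2)) =
      ⨅ χ : (κ →₀ ZMod 2) →+ AddCircle (1:ℝ), Filter.comap χ (nhds 0) := by
    show @nhds _ (bohrTopology (κ →₀ ZMod 2)) 0 = _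
    rw [bohrTopology, nhds_iInf]
    refine iInf_congr fun χ => ?_
    rw [nhds_induced, map_zero]
  -- 0 in closure
  have hclo : (0 : κ →₀ ZMod 2) ∈ closure S := by
    rw [mem_closure_iff_nhds]
    intro U hU
    rw [hnhds, Filter.mem_iInf'] at hU
    obtain ⟨I, hIfin, V, hV, hVuniv, hUeq, -⟩ := hU
    haveI : Finite I := hIfin
    let g : κ → (I → Bool) := fun a χ => decide ((χ : (κ →₀ ZMod 2) →+ AddCircle (1:ℝ)) (Finsupp.single a 1) = 0)
    obtain ⟨a, b, hab, hgab⟩ := Finite.exists_ne_map_eq_of_infinite g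
    set y : κ →₀ ZMod 2 := Finsupp.single a 1 + Finsupp.single b 1 with hy
    have hyS : y ∈ S := by
      have hd : Disjoint (Finsupp.single a (1 : ZMod 2)).support
          (Finsupp.single b (1 : ZMod 2)).support := by
        rw [Finsupp.support_single_ne_zero a one_ne_zero,
          Finsupp.support_single_ne_zero b one_ne_zero]
        simpa [eq_comm] using hab
      have : y.support = {a, b} := by
        rw [hy, Finsupp.support_add_eq hd,
          Finsupp.support_single_ne_zero a one_ne_zero,
          Finsupp.support_single_ne_zero b one_ne_zero]
        rfl
      simp only [hS, Set.mem_setOf_eq, this]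
      exact Finset.card_pair hab
    have hyV : ∀ χ ∈ I, y ∈ V χ := by
      intro χ hχ
      have hval : χ (Finsupp.single a 1) = χ (Finsupp.single b 1) := by
        have hg := congrFun hgab ⟨χ, hχ⟩
        simp only [g, decide_eq_decide] at hg
        rcases htor χ (Finsupp.single a 1) with h1 | h1 <;>
          rcases htor χ (Finsupp.single b 1) with h2 | h2
        · rw [h1, h2]
        · exact absurd (hg.mp h1) (by rw [h2]; exact half_ne_zero)
        · exact absurd (hg.mpr h2) (by rw [h1]; exact half_ne_zero)
        · rw [h1, h2]
      have hzero : χ y = 0 := by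
        rw [hy, map_add, hval, ← map_add, self_add_self, map_zero]
      obtain ⟨W, hW, hWV⟩ := Filter.mem_comap.mp (hV χ)
      exact hWV (by simp [Set.mem_preimage, hzero]; exact mem_of_mem_nhds hW)
    refine ⟨y, ?_, hyS⟩
    rw [hUeq]
    exact Set.mem_iInter₂.mpr hyV
  refine ⟨hdisc, ?_, hclo⟩
  intro hcl
  have h0 : (0 : κ →₀ ZMod 2) ∈ S := hcl.closure_subset hclo
  simp [hS] at h0
end

section
/- Let G be an abelian group, let κ be an infinite cardinal, and let f : κ → G be an arbitrary function. Let D_κ = {0} ∪ [κ]^2 ⊆ B_κ carry the topology induced from B_κ^#. Then the map μ_f : D_κ → G^# defined by μ_f(0) = 0 and μ_f(e_α + e_β) = f(α) − f(β) for α < β < κ is continuous. Moreover, if the family {f(α) : α < κ} is independent in G (each f(α) ≠ 0, and whenever n_1 f(α_1) + ⋯ + n_k f(α_k) = 0 for distinct α_1, …, α_k and integers n_i, then n_i f(α_i) = 0 for every i), then μ_f is a topological embedding. -/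
open Topology Filter


open scoped Pointwise

namespace BohrAux

noncomputable def rep (x : AddCircle (1:ℝ)) : ℝ := (AddCircle.equivIco 1 0 x : ℝ)

lemma rep_coe (x : AddCircle (1:ℝ)) : ((rep x : ℝ) : AddCircle (1:ℝ)) = x :=
  (AddCircle.equivIco 1 0).symm_apply_apply x

lemma rep_mem (x : AddCircle (1:ℝ)) : rep x ∈ Set.Ico (0:ℝ) 1 := by
  have := (AddCircle.equivIco (1:ℝ) 0 x).2
  simpa [rep] using this

lemma norm_coe_le' (r : ℝ) : ‖(↑r : AddCircle (1:ℝ))‖ ≤ |r| := by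
  rcases le_or_gt |r| (1/2) with h | h
  · rw [(AddCircle.norm_coe_eq_abs_iff (p := 1) one_ne_zero).2 (by simpa using h)]
  · calc ‖(↑r : AddCircle (1:ℝ))‖ ≤ |(1:ℝ)|/2 :=
          AddCircle.norm_le_half_period (p := (1:ℝ)) one_ne_zero
    _ ≤ |r| := by rw [abs_one]; linarith

lemma norm_coe_eq (r : ℝ) (h0 : 0 ≤ r) (h1 : r ≤ 1/2) : ‖(↑r : AddCircle (1:ℝ))‖ = r := by
  rw [(AddCircle.norm_coe_eq_abs_iff (p := 1) one_ne_zero).2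
      (by rw [abs_of_nonneg h0, abs_one]; linarith), abs_of_nonneg h0]

/-- The element `1/2` of the circle. -/
noncomputable def half : AddCircle (1:ℝ) := ((2⁻¹ : ℝ) : AddCircle (1:ℝ))

lemma half_add_half : half + half = 0 := by
  rw [half, ← AddCircle.coe_add]
  norm_num

lemma norm_half : ‖half‖ = 1/2 := by
  rw [half, norm_coe_eq] <;> norm_num

lemma two_torsion (x : AddCircle (1:ℝ)) (h : x + x = 0) : x = 0 ∨ x = half := by
  have h2 : ((rep x + rep x : ℝ) : AddCircle (1:ℝ)) = 0 := by
    rw [AddCircle.coe_add, rep_coe, h]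
  rw [AddCircle.coe_eq_zero_iff] at h2
  obtain ⟨n, hn⟩ := h2
  have hr := rep_mem x
  have hrn : rep x = n / 2 := by simp at hn; linarith
  have hn0 : n = 0 ∨ n = 1 := by
    rcases hr with ⟨h0, h1⟩; rw [hrn] at h0 h1
    have h2 : (0:ℝ) ≤ n := by linarith
    have h3 : (n:ℝ) < 2 := by linarith
    have h2' : (0:ℤ) ≤ n := by exact_mod_cast h2
    have h3' : n < 2 := by exact_mod_cast h3
    omega
  rcases hn0 with rfl | rfl
  · left; rw [← rep_coe x, hrn]; norm_num
  · right; rw [← rep_coe x, hrn, half]; norm_num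

section mkChar
variable {κ : Type*}

/-- character of `⊕ ZMod 2` sending `e α` to `c α` (each `c α` 2-torsion). -/
noncomputable def mkChar (c : κ → AddCircle (1:ℝ)) (hc : ∀ α, c α + c α = 0) :
    (κ →₀ ZMod 2) →+ AddCircle (1:ℝ) :=
  Finsupp.liftAddHom (fun α => ZMod.lift 2
    ⟨zmultiplesHom _ (c α), by simp [zmultiplesHom_apply, two_zsmul, hc α]⟩)

lemma mkChar_single (c : κ → AddCircle (1:ℝ)) (hc : ∀ α, c α + c α = 0) (α : κ) :
    mkChar c hc (Finsupp.single α 1) = c α := by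
  rw [mkChar, Finsupp.liftAddHom_apply_single]
  have : ((1 : ℤ) : ZMod 2) = 1 := by decide
  rw [← this, ZMod.lift_coe]
  simp [zmultiplesHom_apply]

lemma mkChar_pair (c : κ → AddCircle (1:ℝ)) (hc : ∀ α, c α + c α = 0) (α β : κ) :
    mkChar c hc (Finsupp.single α 1 + Finsupp.single β 1) = c α + c β := by
  rw [map_add, mkChar_single, mkChar_single]

lemma self_add_self (x : κ →₀ ZMod 2) : x + x = 0 := by
  ext γ
  have : ∀ a : ZMod 2, a + a = 0 := by decide
  simp [this]

lemma char_dichotomy (χ : (κ →₀ ZMod 2) →+ AddCircle (1:ℝ)) (x : κ →₀ ZMod 2) :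
    χ x = 0 ∨ χ x = half := by
  apply two_torsion
  rw [← map_add, self_add_self, map_zero]

end mkChar

lemma zmod2_cases (a : ZMod 2) : a = 0 ∨ a = 1 := by revert a; decide

/-- decomposition of a support-2 element -/
lemma pair_decomp {κ : Type*} [LinearOrder κ] (x : κ →₀ ZMod 2) (h : x.support.card = 2) :
    ∃ α β, α < β ∧ x = Finsupp.single α 1 + Finsupp.single β 1 := by
  obtain ⟨α, β, hne0, hs0⟩ := Finset.card_eq_two.1 h
  have key : ∀ a b : κ, a < b → x.support = {a, b} →
      x = Finsupp.single a 1 + Finsupp.single b 1 := by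
    intro a b hab hs
    have hne : a ≠ b := hab.ne
    ext γ
    rcases eq_or_ne γ a with rfl | hγa
    · have hv : x γ ≠ 0 := by rw [← Finsupp.mem_support_iff, hs]; simp
      rcases zmod2_cases (x γ) with h0 | h1
      · exact absurd h0 hv
      · simp [h1, Finsupp.single_apply, hne, hne.symm]
    · rcases eq_or_ne γ b with rfl | hγb
      · have hv : x γ ≠ 0 := by rw [← Finsupp.mem_support_iff, hs]; simp
        rcases zmod2_cases (x γ) with h0 | h1
        · exact absurd h0 hv
        · simp [h1, Finsupp.single_apply, hne, hne.symm]
      · have hv : x γ = 0 := by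
          by_contra hne0'
          have := Finsupp.mem_support_iff.2 hne0'
          rw [hs] at this; simp at this; tauto
        simp [hv, Finsupp.single_apply, hγa.symm, hγb.symm]
  rcases hne0.lt_or_gt with hlt | hlt
  · exact ⟨α, β, hlt, key α β hlt hs0⟩
  · exact ⟨β, α, hlt, key β α hlt (by rw [hs0, Finset.pair_comm])⟩

lemma pair_eq {κ : Type*} [LinearOrder κ] {α β γ δ : κ} (hαβ : α < β) (hγδ : γ < δ)
    (hα : α = γ ∨ α = δ) (hβ : β = γ ∨ β = δ) : α = γ ∧ β = δ := by
  rcases hα with rfl | rfl <;> rcases hβ with h | h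
  · exact absurd (h ▸ hαβ) (lt_irrefl _)
  · exact ⟨rfl, h⟩
  · exact absurd (hγδ.trans (h ▸ hαβ)) (lt_irrefl _)
  · exact absurd (h ▸ hαβ) (lt_irrefl _)

section ext
variable {κ G : Type*} [AddCommGroup G]

lemma exists_char_s11 (f : κ → G)
    (hind : ∀ (s : Finset κ) (n : κ → ℤ), ∑ α ∈ s, n α • f α = 0 → ∀ α ∈ s, n α • f α = 0)
    (c : κ → AddCircle (1:ℝ)) (hc : ∀ α, (addOrderOf (f α)) • c α = 0) :
    ∃ ψ : G →+ AddCircle (1:ℝ), ∀ α, ψ (f α) = c α := by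
  classical
  set π : (κ →₀ ℤ) →+ G := Finsupp.liftAddHom (fun α => zmultiplesHom G (f α)) with hπ
  set φ : (κ →₀ ℤ) →+ AddCircle (1:ℝ) :=
    Finsupp.liftAddHom (fun α => zmultiplesHom _ (c α)) with hφ
  have hπs : ∀ α, π (Finsupp.single α 1) = f α := by
    intro α; rw [hπ, Finsupp.liftAddHom_apply_single]; simp [zmultiplesHom_apply]
  have hφs : ∀ α, φ (Finsupp.single α 1) = c α := by
    intro α; rw [hφ, Finsupp.liftAddHom_apply_single]; simp [zmultiplesHom_apply]
  have hker : ∀ x ∈ π.ker, x ∈ φ.ker := by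
    intro x hx
    rw [AddMonoidHom.mem_ker] at hx ⊢
    have hπx : π x = ∑ α ∈ x.support, x α • f α := by
      rw [hπ, Finsupp.liftAddHom_apply, Finsupp.sum]; rfl
    have hφx : φ x = ∑ α ∈ x.support, x α • c α := by
      rw [hφ, Finsupp.liftAddHom_apply, Finsupp.sum]; rfl
    rw [hπx] at hx
    have hall := hind x.support x hx
    rw [hφx]
    refine Finset.sum_eq_zero fun α hα => ?_
    have h1 : (addOrderOf (f α) : ℤ) ∣ x α :=
      addOrderOf_dvd_iff_zsmul_eq_zero.2 (hall α hα)
    obtain ⟨k, hk⟩ := h1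
    rw [hk, mul_comm, mul_zsmul, natCast_zsmul, hc α, smul_zero]
  set ψ₀ : π.range →+ AddCircle (1:ℝ) :=
    (QuotientAddGroup.lift π.ker φ hker).comp
      (QuotientAddGroup.quotientKerEquivRange π).symm.toAddMonoidHom with hψ₀
  have hψ₀s : ∀ x : (κ →₀ ℤ), ψ₀ (π.rangeRestrict x) = φ x := by
    intro x
    have h1 : (QuotientAddGroup.quotientKerEquivRange π) (QuotientAddGroup.mk x)
        = π.rangeRestrict x := rfl
    rw [hψ₀, AddMonoidHom.comp_apply, AddEquiv.coe_toAddMonoidHom, ← h1,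
      AddEquiv.symm_apply_apply]
    rfl
  obtain ⟨ψ, hψ⟩ := Module.Baer.extension_property_addMonoidHom
    (Module.Baer.of_divisible (AddCircle (1:ℝ))) π.range.subtype
    Subtype.coe_injective ψ₀
  refine ⟨ψ, fun α => ?_⟩
  have : ψ (f α) = ψ₀ (π.rangeRestrict (Finsupp.single α 1)) := by
    rw [← hψ]
    simp only [AddMonoidHom.comp_apply]
    congr 1
    simp [hπs α]
  rw [this, hψ₀s, hφs]

end ext

/-- the distinguished torsion value: for a group element of additive order `n`,
`tval n` is a real number representing an element of the circle of distance ≥ 1/3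
from zero which is killed by `n`. -/
noncomputable def tval (n : ℕ) : ℝ := if n = 0 then 2⁻¹ else ((n / 2 : ℕ) : ℝ) / n

lemma tval_nonneg (n : ℕ) : 0 ≤ tval n := by
  rw [tval]; split_ifs <;> positivity

lemma tval_le_half (n : ℕ) : tval n ≤ 1/2 := by
  rw [tval]; split_ifs with h
  · norm_num
  · rw [div_le_iff₀ (by positivity)]
    have h2 : 2 * (n / 2) ≤ n := by omega
    have := (Nat.cast_le (α := ℝ)).2 h2
    push_cast at this
    linarith

lemma tval_ge_third {n : ℕ} (hn : n ≠ 1) : 1/3 ≤ tval n := by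
  rw [tval]; split_ifs with h
  · norm_num
  · rw [le_div_iff₀ (by positivity)]
    have h2 : n ≤ 3 * (n / 2) := by omega
    have := (Nat.cast_le (α := ℝ)).2 h2
    push_cast at this
    linarith

lemma tval_norm {n : ℕ} (hn : n ≠ 1) :
    ‖((tval n : ℝ) : AddCircle (1:ℝ))‖ = tval n :=
  norm_coe_eq _ (tval_nonneg n) (tval_le_half n)

lemma tval_norm_ge {n : ℕ} (hn : n ≠ 1) :
    1/3 ≤ ‖((tval n : ℝ) : AddCircle (1:ℝ))‖ := by
  rw [tval_norm hn]; exact tval_ge_third hn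

lemma tval_torsion (n : ℕ) : n • ((tval n : ℝ) : AddCircle (1:ℝ)) = 0 := by
  rcases eq_or_ne n 0 with rfl | hn
  · rw [zero_smul]
  · rw [← AddCircle.coe_nsmul, tval]
    simp only [hn, if_false]
    rw [AddCircle.coe_eq_zero_iff]
    refine ⟨(n / 2 : ℕ), ?_⟩
    have hn' : (n:ℝ) ≠ 0 := Nat.cast_ne_zero.2 hn
    rw [zsmul_eq_mul, nsmul_eq_mul]
    rw [Int.cast_natCast, mul_one, mul_div_cancel₀ _ hn']


lemma char_continuous {H : Type*} [AddCommGroup H] [tH : TopologicalSpace H]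
    (htH : tH = bohrTopology H) (χ : H →+ AddCircle (1:ℝ)) : Continuous χ := by
  subst htH
  unfold bohrTopology
  exact continuous_iInf_dom (i := χ) continuous_induced_dom

lemma bohr_nhds {H : Type*} [AddCommGroup H] [tH : TopologicalSpace H]
    (htH : tH = bohrTopology H) (g : H) :
    𝓝 g = ⨅ ψ : H →+ AddCircle (1:ℝ), Filter.comap ψ (𝓝 (ψ g)) := by
  subst htH
  unfold bohrTopology
  rw [_root_.nhds_iInf]
  exact iInf_congr fun ψ => nhds_induced ψ g

section Main

variable {κ G : Type*} [LinearOrder κ] [AddCommGroup G]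

/-- any nonzero point of `D` is isolated. -/
lemma singleton_nhds [tB : TopologicalSpace (κ →₀ ZMod 2)]
    (htB : tB = bohrTopology (κ →₀ ZMod 2))
    (x : {x : κ →₀ ZMod 2 // x = 0 ∨ x.support.card = 2})
    {α β : κ} (hαβ : α < β)
    (hx : (x : κ →₀ ZMod 2) = Finsupp.single α 1 + Finsupp.single β 1) :
    {x} ∈ 𝓝 x := by
  classical
  set cA : κ → AddCircle (1:ℝ) := fun η => if η = α then half else 0 with hcAdef
  set cB : κ → AddCircle (1:ℝ) := fun η => if η = β then half else 0 with hcBdef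
  have hcA : ∀ η, cA η + cA η = 0 := by
    intro η; by_cases h : η = α <;> simp [hcAdef, h, half_add_half]
  have hcB : ∀ η, cB η + cB η = 0 := by
    intro η; by_cases h : η = β <;> simp [hcBdef, h, half_add_half]
  set U : Set (κ →₀ ZMod 2) :=
    (mkChar cA hcA) ⁻¹' Metric.ball half (1/4) ∩ (mkChar cB hcB) ⁻¹' Metric.ball half (1/4)
    with hUdef
  have hUopen : IsOpen U :=
    ((Metric.isOpen_ball).preimage (char_continuous htB _)).inter
      ((Metric.isOpen_ball).preimage (char_continuous htB _))
  have hxU : (x : κ →₀ ZMod 2) ∈ U := by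
    have h1 : mkChar cA hcA (x : κ →₀ ZMod 2) = half := by
      rw [hx, mkChar_pair]
      simp only [hcAdef, if_pos rfl, if_neg hαβ.ne', add_zero]
    have h2 : mkChar cB hcB (x : κ →₀ ZMod 2) = half := by
      rw [hx, mkChar_pair]
      simp only [hcBdef, if_pos rfl, if_neg hαβ.ne, zero_add]
    constructor <;>
      simp [hUdef, Set.mem_preimage, Metric.mem_ball, h1, h2]
  have hmem : Subtype.val ⁻¹' U ∈ 𝓝 x :=
    (hUopen.preimage continuous_subtype_val).mem_nhds hxU
  refine Filter.mem_of_superset hmem ?_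
  rintro y ⟨hy1, hy2⟩
  have hyD := y.2
  rcases hyD with hy0 | hyc
  · exfalso
    have h0 : mkChar cA hcA (y : κ →₀ ZMod 2) = 0 := by rw [hy0, map_zero]
    rw [Set.mem_preimage, Metric.mem_ball, h0] at hy1
    have hd0 : dist (0 : AddCircle (1:ℝ)) half = 1/2 := by
      rw [dist_eq_norm, zero_sub, norm_neg, norm_half]
    rw [hd0] at hy1
    norm_num at hy1
  · obtain ⟨γ, δ, hγδ, hy⟩ := pair_decomp (y : κ →₀ ZMod 2) hyc
    rw [Set.mem_preimage, Metric.mem_ball] at hy1 hy2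
    have hvA : mkChar cA hcA (y : κ →₀ ZMod 2) = cA γ + cA δ := by rw [hy, mkChar_pair]
    have hvB : mkChar cB hcB (y : κ →₀ ZMod 2) = cB γ + cB δ := by rw [hy, mkChar_pair]
    have hd0 : dist (0 : AddCircle (1:ℝ)) half = 1/2 := by
      rw [dist_eq_norm, zero_sub, norm_neg, norm_half]
    have hαmem : α = γ ∨ α = δ := by
      by_contra hcon
      push_neg at hcon
      have : cA γ + cA δ = 0 := by
        simp [hcAdef, (Ne.symm hcon.1), (Ne.symm hcon.2)]
      rw [hvA, this, hd0] at hy1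
      norm_num at hy1
    have hβmem : β = γ ∨ β = δ := by
      by_contra hcon
      push_neg at hcon
      have : cB γ + cB δ = 0 := by
        simp [hcBdef, (Ne.symm hcon.1), (Ne.symm hcon.2)]
      rw [hvB, this, hd0] at hy2
      norm_num at hy2
    obtain ⟨h1, h2⟩ := pair_eq hαβ hγδ hαmem hβmem
    have : (y : κ →₀ ZMod 2) = (x : κ →₀ ZMod 2) := by rw [hy, hx, h1, h2]
    exact Subtype.ext this

theorem mu_continuous [tB : TopologicalSpace (κ →₀ ZMod 2)] [tG : TopologicalSpace G]
    (htB : tB = bohrTopology (κ →₀ ZMod 2)) (htG : tG = bohrTopology G)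
    (f : κ → G)
    (μ : {x : κ →₀ ZMod 2 // x = 0 ∨ x.support.card = 2} → G)
    (hμ0 : ∀ x : {x : κ →₀ ZMod 2 // x = 0 ∨ x.support.card = 2}, (x : κ →₀ ZMod 2) = 0 →
      μ x = 0)
    (hμ2 : ∀ (α β : κ), α < β → ∀ x : {x : κ →₀ ZMod 2 // x = 0 ∨ x.support.card = 2},
      (x : κ →₀ ZMod 2) = Finsupp.single α 1 + Finsupp.single β 1 → μ x = f α - f β) :
    Continuous μ := by
  classical
  rw [continuous_iff_continuousAt]
  intro x
  unfold ContinuousAt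
  rw [bohr_nhds htG (μ x), Filter.tendsto_iInf]
  intro ψ
  rw [Filter.tendsto_comap_iff]
  rcases x.2 with hx0 | hx2
  · -- continuity at zero
    rw [Metric.tendsto_nhds]
    intro ε hε
    have hμx : ψ (μ x) = 0 := by rw [hμ0 x hx0, map_zero]
    set n : ℕ := max 2 (⌈1/ε⌉₊ + 1) with hndef
    have hn2 : 2 ≤ n := le_max_left _ _
    have hnpos : (0:ℝ) < n := by
      have : 0 < n := by omega
      exact_mod_cast this
    have hnε : 1/(n:ℝ) < ε := by
      have h1 : (1:ℝ)/ε ≤ ⌈1/ε⌉₊ := Nat.le_ceil _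
      have h2 : ((⌈1/ε⌉₊ + 1 : ℕ) : ℝ) ≤ n := by
        exact_mod_cast Nat.cast_le.2 (le_max_right 2 (⌈1/ε⌉₊ + 1))
      have h3 : (1:ℝ)/ε < n := by push_cast at h2; linarith
      have h4 : 1 < (n:ℝ) * ε := (div_lt_iff₀ hε).1 h3
      rw [div_lt_iff₀ hnpos]
      linarith [h4, mul_comm (n:ℝ) ε]
    set cl : κ → ℕ := fun η => ⌊(n:ℝ) * rep (ψ (f η))⌋₊ with hcldef
    set c : ℕ → κ → AddCircle (1:ℝ) := fun i η => if cl η = i then half else 0 with hcdef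
    have hc : ∀ i η, c i η + c i η = 0 := by
      intro i η; by_cases h : cl η = i <;> simp [hcdef, h, half_add_half]
    set U : Set (κ →₀ ZMod 2) :=
      ⋂ i ∈ Finset.range n, (mkChar (c i) (hc i)) ⁻¹' Metric.ball 0 (1/4) with hUdef
    have hUopen : IsOpen U :=
      isOpen_biInter_finset fun i _ => (Metric.isOpen_ball).preimage (char_continuous htB _)
    have hxU : (x : κ →₀ ZMod 2) ∈ U := by
      refine Set.mem_iInter₂.2 fun i _ => ?_
      have h0 : mkChar (c i) (hc i) (x : κ →₀ ZMod 2) = 0 := by rw [hx0, map_zero]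
      simp [Set.mem_preimage, Metric.mem_ball, h0]
    have hU : Subtype.val ⁻¹' U ∈ 𝓝 x :=
      (hUopen.preimage continuous_subtype_val).mem_nhds hxU
    filter_upwards [hU] with y hy
    rw [hμx, dist_zero_right]
    show ‖ψ (μ y)‖ < ε
    rcases y.2 with hy0 | hy2
    · rw [hμ0 y hy0, map_zero, norm_zero]; exact hε
    · obtain ⟨γ, δ, hγδ, hy1⟩ := pair_decomp (y : κ →₀ ZMod 2) hy2
      have hμy : μ y = f γ - f δ := hμ2 γ δ hγδ y hy1
      have hrγ := rep_mem (ψ (f γ))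
      have hrδ := rep_mem (ψ (f δ))
      have hγlt : cl γ < n := by
        rw [hcldef]
        rw [Nat.floor_lt (mul_nonneg hnpos.le hrγ.1)]
        calc (n:ℝ) * rep (ψ (f γ)) < (n:ℝ) * 1 := by
              exact mul_lt_mul_of_pos_left hrγ.2 hnpos
        _ = n := mul_one _
      have hyi := Set.mem_iInter₂.1 hy (cl γ) (Finset.mem_range.2 hγlt)
      rw [Set.mem_preimage, Metric.mem_ball] at hyi
      have hcell : cl γ = cl δ := by
        by_contra hnecl
        have hv : mkChar (c (cl γ)) (hc (cl γ)) (y : κ →₀ ZMod 2) = half := by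
          rw [hy1, mkChar_pair]
          simp only [hcdef, if_pos rfl]
          rw [if_neg (fun h => hnecl h.symm), add_zero]
        rw [hv, dist_eq_norm, sub_zero, norm_half] at hyi
        norm_num at hyi
      have h1 : |rep (ψ (f γ)) - rep (ψ (f δ))| < 1/(n:ℝ) := by
        have hγ1 : (cl γ : ℝ) ≤ (n:ℝ) * rep (ψ (f γ)) := Nat.floor_le (mul_nonneg hnpos.le hrγ.1)
        have hγ2 : (n:ℝ) * rep (ψ (f γ)) < cl γ + 1 := Nat.lt_floor_add_one _
        have hδ1 : (cl δ : ℝ) ≤ (n:ℝ) * rep (ψ (f δ)) := Nat.floor_le (mul_nonneg hnpos.le hrδ.1)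
        have hδ2 : (n:ℝ) * rep (ψ (f δ)) < cl δ + 1 := Nat.lt_floor_add_one _
        have hcc : ((cl γ : ℝ)) = (cl δ : ℝ) := by rw [hcell]
        rw [abs_sub_lt_iff]
        constructor <;> rw [lt_div_iff₀ hnpos] <;> nlinarith
      calc ‖ψ (μ y)‖ = ‖((rep (ψ (f γ)) - rep (ψ (f δ)) : ℝ) : AddCircle (1:ℝ))‖ := by
            rw [hμy, map_sub, ← rep_coe (ψ (f γ)), ← rep_coe (ψ (f δ)), ← AddCircle.coe_sub,
              rep_coe, rep_coe]
      _ ≤ |rep (ψ (f γ)) - rep (ψ (f δ))| := norm_coe_le' _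
      _ < 1/(n:ℝ) := h1
      _ < ε := hnε
  · -- isolated point
    obtain ⟨α, β, hαβ, hx⟩ := pair_decomp (x : κ →₀ ZMod 2) hx2
    have hsing := singleton_nhds htB x hαβ hx
    have hev : (fun _ => ψ (μ x)) =ᶠ[𝓝 x] fun y => ψ (μ y) := by
      filter_upwards [hsing] with y hy
      rw [Set.mem_singleton_iff.1 hy]
    exact Filter.Tendsto.congr' hev tendsto_const_nhds

end Main

section Indep
variable {κ G : Type*} [LinearOrder κ] [AddCommGroup G]

lemma sum_single_coeff [DecidableEq κ] (f : κ → G) (s : Finset κ) (a : κ) (ha : a ∈ s) :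
    ∑ η ∈ s, (if η = a then (1:ℤ) else 0) • f η = f a := by
  have h : ∀ η ∈ s, (if η = a then (1:ℤ) else 0) • f η = if η = a then f η else 0 := by
    intro η _; split_ifs <;> simp
  rw [Finset.sum_congr rfl h, Finset.sum_ite_eq' s a f, if_pos ha]

lemma indep_two (f : κ → G) (hne : ∀ α, f α ≠ 0)
    (hind : ∀ (s : Finset κ) (n : κ → ℤ), ∑ α ∈ s, n α • f α = 0 → ∀ α ∈ s, n α • f α = 0)
    {a b : κ} (hab : a ≠ b) (h : f a = f b) : False := by
  classical
  set m : κ → ℤ := fun η => (if η = a then (1:ℤ) else 0) - (if η = b then 1 else 0) with hm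
  have hsum : ∑ η ∈ ({a, b} : Finset κ), m η • f η = 0 := by
    rw [Finset.sum_pair hab]
    simp only [hm, if_pos rfl, if_neg hab, if_neg hab.symm]
    simp [h]
  have := hind {a, b} m hsum a (by simp)
  have hma : m a = 1 := by simp [hm, hab]
  rw [hma, one_smul] at this
  exact hne a this

lemma indep_sub_ne (f : κ → G) (hne : ∀ α, f α ≠ 0)
    (hind : ∀ (s : Finset κ) (n : κ → ℤ), ∑ α ∈ s, n α • f α = 0 → ∀ α ∈ s, n α • f α = 0)
    {a b : κ} (hab : a ≠ b) : f a - f b ≠ 0 := fun h =>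
  indep_two f hne hind hab (sub_eq_zero.1 h)

lemma indep_pair_eq (f : κ → G) (hne : ∀ α, f α ≠ 0)
    (hind : ∀ (s : Finset κ) (n : κ → ℤ), ∑ α ∈ s, n α • f α = 0 → ∀ α ∈ s, n α • f α = 0)
    {α β γ δ : κ} (hαβ : α < β) (hγδ : γ < δ)
    (h : f α - f β = f γ - f δ) : α = γ ∧ β = δ := by
  classical
  have hαγ : α = γ := by
    by_contra hac
    rcases eq_or_ne α δ with rfl | had
    · -- γ < α < β, f α - f β = f γ - f α
      have hγα : γ < α := hγδ
      have hβγ : β ≠ γ := fun hh => absurd (hγα.trans hαβ) (hh ▸ lt_irrefl β)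
      set m : κ → ℤ := fun η => if η = α then 2 else if η = β then -1 else if η = γ then -1
        else 0 with hm
      have hmα : m α = 2 := by simp [hm]
      have hmβ : m β = -1 := by simp [hm, hαβ.ne']
      have hmγ : m γ = -1 := by simp [hm, hac, Ne.symm hβγ, hγα.ne]
      have hsum : ∑ η ∈ ({α, β, γ} : Finset κ), m η • f η = 0 := by
        rw [Finset.sum_insert (by simp [hαβ.ne, hac]),
          Finset.sum_insert (by simp [hβγ]), Finset.sum_singleton, hmα, hmβ, hmγ]
        have hexp : (2:ℤ) • f α + ((-1:ℤ) • f β + (-1:ℤ) • f γ)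
            = (f α - f β) - (f γ - f α) := by
          simp only [neg_smul, one_smul, two_smul]
          abel
        rw [hexp, h, sub_self]
      have := hind {α, β, γ} m hsum β (by simp)
      rw [hmβ, neg_smul, one_smul, neg_eq_zero] at this
      exact hne β this
    · -- α, β, γ, δ with α ∉ {γ, δ}
      set m : κ → ℤ := fun η => (if η = α then (1:ℤ) else 0) - (if η = β then 1 else 0)
        - (if η = γ then 1 else 0) + (if η = δ then 1 else 0) with hm
      set s : Finset κ := {α, β, γ, δ} with hs
      have hsum : ∑ η ∈ s, m η • f η = 0 := by
        have hexp : ∀ η ∈ s, m η • f η =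
            (if η = α then (1:ℤ) else 0) • f η - (if η = β then (1:ℤ) else 0) • f η
            - (if η = γ then (1:ℤ) else 0) • f η + (if η = δ then (1:ℤ) else 0) • f η := by
          intro η _
          simp only [hm, sub_smul, add_smul]
        rw [Finset.sum_congr rfl hexp, Finset.sum_add_distrib, Finset.sum_sub_distrib,
          Finset.sum_sub_distrib, sum_single_coeff f s α (by simp [hs]),
          sum_single_coeff f s β (by simp [hs]), sum_single_coeff f s γ (by simp [hs]),
          sum_single_coeff f s δ (by simp [hs])]
        have : f α - f β - f γ + f δ = (f α - f β) - (f γ - f δ) := by abel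
        rw [this, h, sub_self]
      have hmα : m α = 1 := by simp [hm, hαβ.ne, hac, had]
      have := hind s m hsum α (by simp [hs])
      rw [hmα, one_smul] at this
      exact hne α this
  refine ⟨hαγ, ?_⟩
  by_contra hbd
  subst hαγ
  have hfb : f β = f δ := by
    have h2 : f α - f β - (f α - f δ) = 0 := by rw [h, sub_self]
    have h3 : f δ - f β = f α - f β - (f α - f δ) := by abel
    rw [h2] at h3
    exact (sub_eq_zero.1 h3).symm
  exact indep_two f hne hind hbd hfb

end Indep


section Emb
variable {κ G : Type*} [LinearOrder κ] [AddCommGroup G]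

/-- the distinguished circle value attached to `f η`. -/
noncomputable def tcirc (f : κ → G) (η : κ) : AddCircle (1:ℝ) :=
  ((tval (addOrderOf (f η)) : ℝ) : AddCircle (1:ℝ))

lemma tcirc_norm_ge (f : κ → G) {η : κ} (hη : f η ≠ 0) : 1/3 ≤ ‖tcirc f η‖ :=
  tval_norm_ge (fun h1 => hη (AddMonoid.addOrderOf_eq_one_iff.1 h1))

lemma tcirc_torsion (f : κ → G) (η : κ) : addOrderOf (f η) • tcirc f η = 0 :=
  tval_torsion _

theorem mu_embedding [tB : TopologicalSpace (κ →₀ ZMod 2)] [tG : TopologicalSpace G]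
    (htB : tB = bohrTopology (κ →₀ ZMod 2)) (htG : tG = bohrTopology G)
    (f : κ → G)
    (μ : {x : κ →₀ ZMod 2 // x = 0 ∨ x.support.card = 2} → G)
    (hμ0 : ∀ x : {x : κ →₀ ZMod 2 // x = 0 ∨ x.support.card = 2}, (x : κ →₀ ZMod 2) = 0 →
      μ x = 0)
    (hμ2 : ∀ (α β : κ), α < β → ∀ x : {x : κ →₀ ZMod 2 // x = 0 ∨ x.support.card = 2},
      (x : κ →₀ ZMod 2) = Finsupp.single α 1 + Finsupp.single β 1 → μ x = f α - f β)
    (hne : ∀ α, f α ≠ 0)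
    (hind : ∀ (s : Finset κ) (n : κ → ℤ), ∑ α ∈ s, n α • f α = 0 → ∀ α ∈ s, n α • f α = 0) :
    Topology.IsEmbedding μ := by
  classical
  have hcont : Continuous μ := mu_continuous htB htG f μ hμ0 hμ2
  refine Topology.IsEmbedding.mk' μ ?_ ?_
  · -- injectivity
    intro y z hyz
    rcases y.2 with hy0 | hy2 <;> rcases z.2 with hz0 | hz2
    · exact Subtype.ext (hy0.trans hz0.symm)
    · exfalso
      obtain ⟨γ, δ, hγδ, hz1⟩ := pair_decomp (z : κ →₀ ZMod 2) hz2
      have : (0:G) = f γ - f δ := by rw [← hμ0 y hy0, hyz, hμ2 γ δ hγδ z hz1]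
      exact indep_sub_ne f hne hind hγδ.ne this.symm
    · exfalso
      obtain ⟨γ, δ, hγδ, hy1⟩ := pair_decomp (y : κ →₀ ZMod 2) hy2
      have : (0:G) = f γ - f δ := by rw [← hμ0 z hz0, ← hyz, hμ2 γ δ hγδ y hy1]
      exact indep_sub_ne f hne hind hγδ.ne this.symm
    · obtain ⟨α, β, hαβ, hy1⟩ := pair_decomp (y : κ →₀ ZMod 2) hy2
      obtain ⟨γ, δ, hγδ, hz1⟩ := pair_decomp (z : κ →₀ ZMod 2) hz2
      have heq : f α - f β = f γ - f δ := by
        rw [← hμ2 α β hαβ y hy1, ← hμ2 γ δ hγδ z hz1, hyz]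
      obtain ⟨h1, h2⟩ := indep_pair_eq f hne hind hαβ hγδ heq
      exact Subtype.ext (by rw [hy1, hz1, h1, h2])
  · -- 𝓝 comparison
    intro a
    refine le_antisymm ?_ (Filter.tendsto_iff_comap.1 hcont.continuousAt)
    intro U hU
    rcases a.2 with ha0 | ha2
    · -- at zero
      have hμa : μ a = 0 := hμ0 a ha0
      have hU' : U ∈ Filter.comap Subtype.val (𝓝 (a : κ →₀ ZMod 2)) := by
        rw [← nhds_subtype_eq_comap]; exact hU
      obtain ⟨V, hV, hVU⟩ := Filter.mem_comap.1 hU'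
      rw [ha0, bohr_nhds htB] at hV
      simp only [map_zero] at hV
      obtain ⟨I, hIfin, Vc, hVc, rfl⟩ := Filter.mem_iInf.1 hV
      haveI : Finite I := hIfin.to_subtype
      have hBi : ∀ i : I, ∃ Bi ∈ 𝓝 (0 : AddCircle (1:ℝ)),
          ((i : (κ →₀ ZMod 2) →+ AddCircle (1:ℝ))) ⁻¹' Bi ⊆ Vc i :=
        fun i => Filter.mem_comap.1 (hVc i)
      choose Bi hBin hBiV using hBi
      have hψ : ∀ i : I, ∃ ψ : G →+ AddCircle (1:ℝ), ∀ η,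
          ψ (f η) = if (i : (κ →₀ ZMod 2) →+ AddCircle (1:ℝ)) (Finsupp.single η 1) = half
            then tcirc f η else 0 := by
        intro i
        refine exists_char_s11 f hind _ (fun η => ?_)
        split_ifs
        · exact tcirc_torsion f η
        · exact smul_zero _
      choose Ψ hΨ using hψ
      refine Filter.mem_comap.2 ⟨⋂ i : I, (Ψ i) ⁻¹' Metric.ball 0 (1/3), ?_, ?_⟩
      · rw [hμa]
        refine (isOpen_iInter_of_finite fun i =>
          (Metric.isOpen_ball).preimage (char_continuous htG (Ψ i))).mem_nhds ?_
        refine Set.mem_iInter.2 fun i => ?_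
        simp [Set.mem_preimage, Metric.mem_ball]
      · intro y hy
        rw [Set.mem_preimage] at hy
        apply hVU
        rw [Set.mem_preimage]
        refine Set.mem_iInter.2 fun i => hBiV i ?_
        rw [Set.mem_preimage]
        suffices hz : (i : (κ →₀ ZMod 2) →+ AddCircle (1:ℝ)) (y : κ →₀ ZMod 2) = 0 by
          rw [hz]; exact mem_of_mem_nhds (hBin i)
        rcases y.2 with hy0 | hy2
        · rw [hy0, map_zero]
        · obtain ⟨γ, δ, hγδ, hy1⟩ := pair_decomp (y : κ →₀ ZMod 2) hy2
          have hμy : μ y = f γ - f δ := hμ2 γ δ hγδ y hy1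
          have hyW := Set.mem_iInter.1 hy i
          rw [Set.mem_preimage, Metric.mem_ball, hμy, map_sub, hΨ i γ, hΨ i δ,
            dist_zero_right] at hyW
          have hiff : ((i : (κ →₀ ZMod 2) →+ AddCircle (1:ℝ)) (Finsupp.single γ 1) = half)
              ↔ ((i : (κ →₀ ZMod 2) →+ AddCircle (1:ℝ)) (Finsupp.single δ 1) = half) := by
            constructor
            · intro hγh
              by_contra hδh
              rw [if_pos hγh, if_neg hδh, sub_zero] at hyW
              have := tcirc_norm_ge f (hne γ)
              linarith
            · intro hδh
              by_contra hγh
              rw [if_pos hδh, if_neg hγh, zero_sub, norm_neg] at hyW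
              have := tcirc_norm_ge f (hne δ)
              linarith
          rw [hy1, map_add]
          by_cases hγh : (i : (κ →₀ ZMod 2) →+ AddCircle (1:ℝ)) (Finsupp.single γ 1) = half
          · rw [hγh, hiff.1 hγh, half_add_half]
          · have hδh : (i : (κ →₀ ZMod 2) →+ AddCircle (1:ℝ)) (Finsupp.single δ 1) = 0 :=
              (char_dichotomy _ _).resolve_right (fun hh => hγh (hiff.2 hh))
            have hγ0 : (i : (κ →₀ ZMod 2) →+ AddCircle (1:ℝ)) (Finsupp.single γ 1) = 0 :=
              (char_dichotomy _ _).resolve_right hγh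
            rw [hγ0, hδh, add_zero]
    · -- at a pair
      obtain ⟨α, β, hαβ, ha1⟩ := pair_decomp (a : κ →₀ ZMod 2) ha2
      have hμa : μ a = f α - f β := hμ2 α β hαβ a ha1
      obtain ⟨ψα, hψα⟩ := exists_char_s11 f hind (fun η => if η = α then tcirc f η else 0)
        (fun η => by split_ifs; exacts [tcirc_torsion f η, smul_zero _])
      obtain ⟨ψβ, hψβ⟩ := exists_char_s11 f hind (fun η => if η = β then tcirc f η else 0)
        (fun η => by split_ifs; exacts [tcirc_torsion f η, smul_zero _])
      have hψαa : ψα (μ a) = tcirc f α := by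
        rw [hμa, map_sub, hψα α, hψα β, if_pos rfl, if_neg hαβ.ne', sub_zero]
      have hψβa : ψβ (μ a) = -(tcirc f β) := by
        rw [hμa, map_sub, hψβ α, hψβ β, if_pos rfl, if_neg hαβ.ne, zero_sub]
      refine Filter.mem_comap.2
        ⟨(ψα ⁻¹' Metric.ball (tcirc f α) (1/6)) ∩ (ψβ ⁻¹' Metric.ball (-(tcirc f β)) (1/6)),
          ?_, ?_⟩
      · refine (((Metric.isOpen_ball).preimage (char_continuous htG ψα)).inter
          ((Metric.isOpen_ball).preimage (char_continuous htG ψβ))).mem_nhds ?_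
        constructor <;> simp [Set.mem_preimage, Metric.mem_ball, hψαa, hψβa]
      · rintro y ⟨hy1, hy2⟩
        rw [Set.mem_preimage, Metric.mem_ball] at hy1 hy2
        suffices hya : y = a by rw [hya]; exact mem_of_mem_nhds hU
        rcases y.2 with hy0 | hyc
        · exfalso
          have hμy : μ y = 0 := hμ0 y hy0
          rw [hμy, map_zero, dist_comm, dist_zero_right] at hy1
          have := tcirc_norm_ge f (hne α)
          linarith
        · obtain ⟨γ, δ, hγδ, hy⟩ := pair_decomp (y : κ →₀ ZMod 2) hyc
          have hμy : μ y = f γ - f δ := hμ2 γ δ hγδ y hy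
          have hαmem : α = γ ∨ α = δ := by
            by_contra hcon
            push_neg at hcon
            rw [hμy, map_sub, hψα γ, hψα δ, if_neg (Ne.symm hcon.1), if_neg (Ne.symm hcon.2),
              sub_zero, dist_comm, dist_zero_right] at hy1
            have := tcirc_norm_ge f (hne α)
            linarith
          have hβmem : β = γ ∨ β = δ := by
            by_contra hcon
            push_neg at hcon
            rw [hμy, map_sub, hψβ γ, hψβ δ, if_neg (Ne.symm hcon.1), if_neg (Ne.symm hcon.2),
              sub_zero, dist_comm, dist_zero_right, norm_neg] at hy2
            have := tcirc_norm_ge f (hne β)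
            linarith
          obtain ⟨h1, h2⟩ := pair_eq hαβ hγδ hαmem hβmem
          exact Subtype.ext (by rw [hy, ha1, h1, h2])

end Emb

end BohrAux

/-- Let `G` be an abelian group, `κ` an infinite (linearly ordered) index set and
`f : κ → G`. The map `μ_f : 𝒟_κ = {0} ∪ [κ]² → G^#`, `μ_f 0 = 0`,
`μ_f (e_α + e_β) = f α - f β` for `α < β`, is continuous; moreover if the family
`{f α}` is independent then `μ_f` is a topological embedding. -/
theorem bohr_mu_continuous_and_embedding (κ G : Type*) [LinearOrder κ] [Infinite κ]
    [AddCommGroup G] (f : κ → G)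
    (μ : {x : κ →₀ ZMod 2 // x = 0 ∨ x.support.card = 2} → G)
    (hμ0 : ∀ x : {x : κ →₀ ZMod 2 // x = 0 ∨ x.support.card = 2}, (x : κ →₀ ZMod 2) = 0 →
      μ x = 0)
    (hμ2 : ∀ (α β : κ), α < β → ∀ x : {x : κ →₀ ZMod 2 // x = 0 ∨ x.support.card = 2},
      (x : κ →₀ ZMod 2) = Finsupp.single α 1 + Finsupp.single β 1 → μ x = f α - f β) :
    letI := bohrTopology (κ →₀ ZMod 2)
    letI := bohrTopology G
    Continuous μ ∧
      (((∀ α, f α ≠ 0) ∧ ∀ (s : Finset κ) (n : κ → ℤ),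
          ∑ α ∈ s, n α • f α = 0 → ∀ α ∈ s, n α • f α = 0) →
        Topology.IsEmbedding μ) := by
  exact ⟨BohrAux.mu_continuous (tB := bohrTopology (κ →₀ ZMod 2)) (tG := bohrTopology G)
      rfl rfl f μ hμ0 hμ2,
    fun h => BohrAux.mu_embedding (tB := bohrTopology (κ →₀ ZMod 2)) (tG := bohrTopology G)
      rfl rfl f μ hμ0 hμ2 h.1 h.2⟩
end
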